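/- arXiv:1905.07647 — 5 statements merged into one kernel-verified Lean document; each statement's English description precedes it below -/
import Mathlib

section
/- Let F be a j×m real matrix, M = F'F, let P be the orthogonal projector onto the column space of M, and let G ⊂ R^m be a finite set. Then there exists δ* > 0 such that for all 0 < δ < δ*, argmax over f ∈ G of det(M + δI_m + ff') is a subset of argmax over f ∈ G of f'(I_m − P)f. -/
open Matrix

private lemma stmt5_dp_nonneg {m : ℕ} (x : Fin m → ℝ) : 0 ≤ x ⬝ᵥ x :=
  Finset.sum_nonneg fun i _ => mul_self_nonneg _

private lemma stmt5_cs {m : ℕ} (x y : Fin m → ℝ) :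
    |x ⬝ᵥ y| ≤ Real.sqrt (x ⬝ᵥ x) * Real.sqrt (y ⬝ᵥ y) := by
  have h := Finset.sum_mul_sq_le_sq_mul_sq Finset.univ x y
  have h2 : (x ⬝ᵥ y) ^ 2 ≤ (x ⬝ᵥ x) * (y ⬝ᵥ y) := by
    simpa [dotProduct, sq] using h
  calc |x ⬝ᵥ y| = Real.sqrt ((x ⬝ᵥ y) ^ 2) := (Real.sqrt_sq_eq_abs _).symm
    _ ≤ Real.sqrt ((x ⬝ᵥ x) * (y ⬝ᵥ y)) := Real.sqrt_le_sqrt h2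
    _ = _ := Real.sqrt_mul (stmt5_dp_nonneg x) _

/-- The Galil–Kiefer method is the limit of the regularized greedy heuristic:
for small enough `δ > 0`, every maximizer of `det(M + δI + ffᵀ)` over a finite
set `G` is a maximizer of `fᵀ(I − P)f`, where `P` is the orthogonal projector
onto the column space of `M = FᵀF`. -/
theorem stmt5 (m j : ℕ) (F : Matrix (Fin j) (Fin m) ℝ)
    (M : Matrix (Fin m) (Fin m) ℝ) (hM : M = Fᵀ * F)
    (P : Matrix (Fin m) (Fin m) ℝ)
    (hPsymm : Pᵀ = P) (hPidem : P * P = P)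
    (hPrange : LinearMap.range P.mulVecLin = LinearMap.range M.mulVecLin)
    (G : Set (Fin m → ℝ)) (hG : G.Finite) :
    ∃ δstar > (0 : ℝ), ∀ δ : ℝ, 0 < δ → δ < δstar →
      {f ∈ G | ∀ g ∈ G,
          (M + δ • (1 : Matrix (Fin m) (Fin m) ℝ) + vecMulVec g g).det ≤
          (M + δ • (1 : Matrix (Fin m) (Fin m) ℝ) + vecMulVec f f).det} ⊆
      {f ∈ G | ∀ g ∈ G,
          g ⬝ᵥ ((1 - P) *ᵥ g) ≤ f ⬝ᵥ ((1 - P) *ᵥ f)} := by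
  classical
  set q : (Fin m → ℝ) → ℝ := fun f => f ⬝ᵥ ((1 - P) *ᵥ f) with hq
  -- choose a preimage under M of P f
  have hrange : ∀ f : Fin m → ℝ, ∃ w, M *ᵥ w = P *ᵥ f := by
    intro f
    have : P *ᵥ f ∈ LinearMap.range M.mulVecLin := by
      rw [← hPrange]; exact ⟨f, rfl⟩
    obtain ⟨w, hw⟩ := this
    exact ⟨w, hw⟩
  choose w hw using hrange
  set C : (Fin m → ℝ) → ℝ :=
    fun f => |f ⬝ᵥ w f| + Real.sqrt (f ⬝ᵥ f) * Real.sqrt (w f ⬝ᵥ w f) with hC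
  have hC0 : ∀ f, 0 ≤ C f := fun f =>
    add_nonneg (abs_nonneg _) (mul_nonneg (Real.sqrt_nonneg _) (Real.sqrt_nonneg _))
  -- quadratic form of M
  have hMq : ∀ x : Fin m → ℝ, x ⬝ᵥ (M *ᵥ x) = (F *ᵥ x) ⬝ᵥ (F *ᵥ x) := by
    intro x
    rw [hM, ← mulVec_mulVec, dotProduct_mulVec, vecMul_transpose]
  -- M kills (1-P) f
  have hMu : ∀ f : Fin m → ℝ, M *ᵥ ((1 - P) *ᵥ f) = 0 := by
    intro f
    set u := (1 - P) *ᵥ f with hu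
    have hPu : P *ᵥ u = 0 := by
      rw [hu, mulVec_mulVec, Matrix.mul_sub, Matrix.mul_one, hPidem, sub_self, zero_mulVec]
    obtain ⟨z, hz⟩ : ∃ z, P *ᵥ z = M *ᵥ u := by
      have : M *ᵥ u ∈ LinearMap.range P.mulVecLin := by
        rw [hPrange]; exact ⟨u, rfl⟩
      obtain ⟨z, hz⟩ := this; exact ⟨z, hz⟩
    have h0 : u ⬝ᵥ (M *ᵥ u) = 0 := by
      rw [← hz, dotProduct_mulVec, ← mulVec_transpose, hPsymm, hPu, zero_dotProduct]
    have hFu : F *ᵥ u = 0 := by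
      have := hMq u
      rw [h0] at this
      exact dotProduct_self_eq_zero.mp this.symm
    rw [hM, ← mulVec_mulVec, hFu, mulVec_zero]
  -- decomposition
  have hdecomp : ∀ f : Fin m → ℝ, M *ᵥ (w f) + (1 - P) *ᵥ f = f := by
    intro f
    rw [hw f, sub_mulVec, one_mulVec]
    abel
  -- positive definiteness
  have hposdef : ∀ δ : ℝ, 0 < δ → (M + δ • (1 : Matrix (Fin m) (Fin m) ℝ)).PosDef := by
    intro δ hδ
    rw [posDef_iff_dotProduct_mulVec]
    constructor
    · rw [Matrix.IsHermitian, conjTranspose_eq_transpose_of_trivial, transpose_add,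
        transpose_smul, transpose_one, hM, transpose_mul, transpose_transpose]
    · intro x hx
      have hsx : star x = x := by simp
      rw [hsx, add_mulVec, smul_mulVec, one_mulVec, dotProduct_add, dotProduct_smul,
        smul_eq_mul, hMq x]
      have h1 : 0 ≤ (F *ᵥ x) ⬝ᵥ (F *ᵥ x) := stmt5_dp_nonneg _
      have h2 : 0 < x ⬝ᵥ x :=
        lt_of_le_of_ne (stmt5_dp_nonneg x) fun h => hx (dotProduct_self_eq_zero.mp h.symm)
      nlinarith
  have hdetpos : ∀ δ : ℝ, 0 < δ → 0 < (M + δ • (1 : Matrix (Fin m) (Fin m) ℝ)).det :=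
    fun δ hδ => (hposdef δ hδ).det_pos
  have hdetunit : ∀ δ : ℝ, 0 < δ → IsUnit (M + δ • (1 : Matrix (Fin m) (Fin m) ℝ)).det :=
    fun δ hδ => isUnit_iff_ne_zero.mpr (hdetpos δ hδ).ne'
  -- key approximation: |δ fᵀ(M+δI)⁻¹f − q f| ≤ δ C f
  have key : ∀ (f : Fin m → ℝ) (δ : ℝ), 0 < δ →
      |δ * (f ⬝ᵥ ((M + δ • (1 : Matrix (Fin m) (Fin m) ℝ))⁻¹ *ᵥ f)) - q f| ≤ δ * C f := by
    intro f δ hδ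
    set A := M + δ • (1 : Matrix (Fin m) (Fin m) ℝ) with hA
    have hdet := hdetunit δ hδ
    have hinv : ∀ x, A⁻¹ *ᵥ (A *ᵥ x) = x := by
      intro x
      rw [mulVec_mulVec, nonsing_inv_mul _ hdet, one_mulVec]
    set u := (1 - P) *ᵥ f with hu
    have hAu : A *ᵥ u = δ • u := by
      rw [hA, add_mulVec, hMu f, smul_mulVec, one_mulVec, zero_add]
    have hinvu : A⁻¹ *ᵥ u = δ⁻¹ • u := by
      have h := hinv u
      rw [hAu, mulVec_smul] at h
      calc A⁻¹ *ᵥ u = δ⁻¹ • (δ • (A⁻¹ *ᵥ u)) := by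
            rw [smul_smul, inv_mul_cancel₀ hδ.ne', one_smul]
        _ = δ⁻¹ • u := by rw [h]
    set y := A⁻¹ *ᵥ (w f) with hy
    have hinvMw : A⁻¹ *ᵥ (M *ᵥ w f) = w f - δ • y := by
      have hMwf : M *ᵥ w f = A *ᵥ w f - δ • (w f) := by
        rw [hA, add_mulVec, smul_mulVec, one_mulVec, add_sub_cancel_right]
      rw [hMwf, mulVec_sub, hinv, mulVec_smul, hy]
    have hAf : A⁻¹ *ᵥ f = (w f - δ • y) + δ⁻¹ • u := by
      conv_lhs => rw [← hdecomp f]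
      rw [mulVec_add, hinvMw, ← hu, hinvu]
    have hformula : δ * (f ⬝ᵥ (A⁻¹ *ᵥ f)) = δ * (f ⬝ᵥ w f) - δ ^ 2 * (f ⬝ᵥ y) + f ⬝ᵥ u := by
      rw [hAf, dotProduct_add, dotProduct_sub, dotProduct_smul, dotProduct_smul,
        smul_eq_mul, smul_eq_mul]
      field_simp
    have hqf : q f = f ⬝ᵥ u := rfl
    have hdiff : δ * (f ⬝ᵥ (A⁻¹ *ᵥ f)) - q f = δ * (f ⬝ᵥ w f) - δ ^ 2 * (f ⬝ᵥ y) := by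
      rw [hformula, hqf]; ring
    -- bound δ √(y⬝y) ≤ √(w⬝w)
    have hAy : A *ᵥ y = w f := by
      rw [hy, mulVec_mulVec, mul_nonsing_inv _ hdet, one_mulVec]
    have h1 : δ * (y ⬝ᵥ y) ≤ y ⬝ᵥ w f := by
      rw [← hAy, hA, add_mulVec, smul_mulVec, one_mulVec, dotProduct_add,
        dotProduct_smul, smul_eq_mul, hMq y]
      have := stmt5_dp_nonneg (F *ᵥ y)
      linarith
    have h2 : y ⬝ᵥ w f ≤ Real.sqrt (y ⬝ᵥ y) * Real.sqrt (w f ⬝ᵥ w f) :=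
      le_trans (le_abs_self _) (stmt5_cs _ _)
    have h3 : (Real.sqrt (y ⬝ᵥ y)) ^ 2 = y ⬝ᵥ y := Real.sq_sqrt (stmt5_dp_nonneg y)
    have hyw : δ * Real.sqrt (y ⬝ᵥ y) ≤ Real.sqrt (w f ⬝ᵥ w f) := by
      rcases eq_or_lt_of_le (Real.sqrt_nonneg (y ⬝ᵥ y)) with h | h
      · rw [← h, mul_zero]; exact Real.sqrt_nonneg _
      · have : δ * (Real.sqrt (y ⬝ᵥ y)) ^ 2 ≤ Real.sqrt (y ⬝ᵥ y) * Real.sqrt (w f ⬝ᵥ w f) := by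
          rw [h3]; linarith
        nlinarith
    have hcsf : |f ⬝ᵥ y| ≤ Real.sqrt (f ⬝ᵥ f) * Real.sqrt (y ⬝ᵥ y) := stmt5_cs f y
    have hfy : δ ^ 2 * |f ⬝ᵥ y| ≤ δ * (Real.sqrt (f ⬝ᵥ f) * Real.sqrt (w f ⬝ᵥ w f)) := by
      have hf0 : 0 ≤ Real.sqrt (f ⬝ᵥ f) := Real.sqrt_nonneg _
      have a1 : δ ^ 2 * |f ⬝ᵥ y| ≤ δ ^ 2 * (Real.sqrt (f ⬝ᵥ f) * Real.sqrt (y ⬝ᵥ y)) :=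
        mul_le_mul_of_nonneg_left hcsf (by positivity)
      have a2 : δ ^ 2 * (Real.sqrt (f ⬝ᵥ f) * Real.sqrt (y ⬝ᵥ y)) =
          δ * (Real.sqrt (f ⬝ᵥ f) * (δ * Real.sqrt (y ⬝ᵥ y))) := by ring
      have a3 : δ * (Real.sqrt (f ⬝ᵥ f) * (δ * Real.sqrt (y ⬝ᵥ y))) ≤
          δ * (Real.sqrt (f ⬝ᵥ f) * Real.sqrt (w f ⬝ᵥ w f)) :=
        mul_le_mul_of_nonneg_left (mul_le_mul_of_nonneg_left hyw hf0) hδ.le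
      linarith
    rw [hdiff]
    calc |δ * (f ⬝ᵥ w f) - δ ^ 2 * (f ⬝ᵥ y)|
        ≤ |δ * (f ⬝ᵥ w f)| + |δ ^ 2 * (f ⬝ᵥ y)| := abs_sub _ _
      _ = δ * |f ⬝ᵥ w f| + δ ^ 2 * |f ⬝ᵥ y| := by
          rw [abs_mul, abs_mul, abs_of_pos hδ, abs_of_pos (pow_pos hδ 2)]
      _ ≤ δ * |f ⬝ᵥ w f| + δ * (Real.sqrt (f ⬝ᵥ f) * Real.sqrt (w f ⬝ᵥ w f)) := by linarith
      _ = δ * C f := by rw [hC]; ring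
  -- determinant formula
  have hdetformula : ∀ (δ : ℝ), 0 < δ → ∀ f : Fin m → ℝ,
      (M + δ • (1 : Matrix (Fin m) (Fin m) ℝ) + vecMulVec f f).det =
      (M + δ • (1 : Matrix (Fin m) (Fin m) ℝ)).det *
        (1 + f ⬝ᵥ ((M + δ • (1 : Matrix (Fin m) (Fin m) ℝ))⁻¹ *ᵥ f)) := by
    intro δ hδ f
    rw [vecMulVec_eq Unit, det_add_replicateCol_mul_replicateRow (hdetunit δ hδ)]
    congr 1
    rw [Matrix.mul_assoc, ← replicateCol_mulVec, det_unique, Matrix.add_apply,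
      Matrix.one_apply_eq, replicateRow_mul_replicateCol_apply]
  -- choose δstar
  set T := hG.toFinset with hT
  set S : Finset ℝ := insert 1
    (((T ×ˢ T).filter fun p => q p.1 < q p.2).image
      fun p => (q p.2 - q p.1) / (C p.1 + C p.2 + 1)) with hS
  have hSne : S.Nonempty := ⟨1, Finset.mem_insert_self _ _⟩
  have hSpos : ∀ x ∈ S, (0 : ℝ) < x := by
    intro x hx
    rcases Finset.mem_insert.mp hx with h | h
    · rw [h]; norm_num
    · obtain ⟨p, hp, hpx⟩ := Finset.mem_image.mp h
      have hlt := (Finset.mem_filter.mp hp).2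
      have hden : (0 : ℝ) < C p.1 + C p.2 + 1 := by
        have := hC0 p.1; have := hC0 p.2; linarith
      rw [← hpx]
      exact div_pos (by linarith) hden
  refine ⟨S.min' hSne, hSpos _ (S.min'_mem hSne), ?_⟩
  intro δ hδ hδs f hf
  obtain ⟨hfG, hmax⟩ := hf
  refine ⟨hfG, ?_⟩
  intro g hgG
  by_contra hlt
  push_neg at hlt
  have hltq : q f < q g := hlt
  have hden : (0 : ℝ) < C f + C g + 1 := by
    have := hC0 f; have := hC0 g; linarith
  have ht : (q g - q f) / (C f + C g + 1) ∈ S := by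
    apply Finset.mem_insert_of_mem
    apply Finset.mem_image.mpr
    exact ⟨(f, g), Finset.mem_filter.mpr
      ⟨Finset.mem_product.mpr ⟨hG.mem_toFinset.mpr hfG, hG.mem_toFinset.mpr hgG⟩, hltq⟩, rfl⟩
  have hδt : δ < (q g - q f) / (C f + C g + 1) := lt_of_lt_of_le hδs (S.min'_le _ ht)
  have hδC : δ * (C f + C g + 1) < q g - q f := (lt_div_iff₀ hden).mp hδt
  have h1 := abs_le.mp (key f δ hδ)
  have h2 := abs_le.mp (key g δ hδ)
  set A := M + δ • (1 : Matrix (Fin m) (Fin m) ℝ) with hA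
  have hstep : δ * (f ⬝ᵥ (A⁻¹ *ᵥ f)) < δ * (g ⬝ᵥ (A⁻¹ *ᵥ g)) := by
    have hexp : δ * (C f + C g + 1) = δ * C f + δ * C g + δ := by ring
    have e1 : δ * (f ⬝ᵥ (A⁻¹ *ᵥ f)) ≤ q f + δ * C f := by linarith [h1.2]
    have e2 : q g - δ * C g ≤ δ * (g ⬝ᵥ (A⁻¹ *ᵥ g)) := by linarith [h2.1]
    have e3 : q f + δ * C f < q g - δ * C g := by linarith [hδC, hexp, hδ]
    exact lt_of_le_of_lt e1 (lt_of_lt_of_le e3 e2)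
  have hlt2 : f ⬝ᵥ (A⁻¹ *ᵥ f) < g ⬝ᵥ (A⁻¹ *ᵥ g) :=
    lt_of_mul_lt_mul_left hstep hδ.le
  have hcontra := hmax g hgG
  rw [hdetformula δ hδ f, hdetformula δ hδ g] at hcontra
  have hdp := hdetpos δ hδ
  have := mul_pos hdp (sub_pos.mpr hlt2)
  nlinarith [hcontra]
end

section
/- Let F ⊂ R^m be a finite spanning set, and let S_GK be the m-element subset produced by the Galil–Kiefer greedy method (at each step selecting f maximizing the squared norm of its projection onto the orthogonal complement of the span of previously chosen vectors). Then det(M(S_GK))^{1/m} ≥ (1/m) · det(M(S*))^{1/m}, where S* is an m-element subset of F maximizing det(M(·)) and M(S) = Σ_{f∈S} ff'. -/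
open Matrix

lemma trace_eq_sum_eig {n : ℕ} {H : Matrix (Fin n) (Fin n) ℝ} (hH : H.IsHermitian) :
    H.trace = ∑ i, hH.eigenvalues i := by
  conv_lhs => rw [hH.spectral_theorem]
  rw [Unitary.conjStarAlgAut_apply, Matrix.trace_mul_comm, ← mul_assoc, Unitary.coe_star_mul_self, one_mul]
  simp [Matrix.trace_diagonal]

lemma psd_det_le_one {n : ℕ} (hn : 0 < n) {H : Matrix (Fin n) (Fin n) ℝ}
    (hH : H.PosSemidef) (htr : H.trace ≤ n) : H.det ≤ 1 := by
  have hherm := hH.1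
  have hdet : H.det = ∏ i, hherm.eigenvalues i := by
    simpa using hherm.det_eq_prod_eigenvalues
  have hnn : ∀ i, 0 ≤ hherm.eigenvalues i := hH.eigenvalues_nonneg
  have hms : (0:ℝ) < n := by exact_mod_cast hn
  have hgm : ∏ i, (hherm.eigenvalues i) ^ ((1:ℝ)/n) ≤ ∑ i, (1/n : ℝ) * hherm.eigenvalues i :=
    Real.geom_mean_le_arith_mean_weighted Finset.univ _ _
      (fun i _ => by positivity)
      (by simp [Finset.sum_const, Finset.card_univ]; field_simp)
      (fun i _ => hnn i)
  have hsum : ∑ i, (1/n : ℝ) * hherm.eigenvalues i ≤ 1 := by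
    rw [← Finset.mul_sum, ← trace_eq_sum_eig hherm]
    rw [div_mul_eq_mul_div, one_mul, div_le_one hms]
    exact htr
  have key : ∏ i, (hherm.eigenvalues i) ^ ((1:ℝ)/n) ≤ 1 := hgm.trans hsum
  have : H.det = (∏ i, (hherm.eigenvalues i) ^ ((1:ℝ)/n)) ^ (n:ℕ) := by
    rw [← Finset.prod_pow]
    rw [hdet]
    congr 1; ext i
    rw [← Real.rpow_natCast ((hherm.eigenvalues i) ^ ((1:ℝ)/n)) n, ← Real.rpow_mul (hnn i)]
    rw [one_div, inv_mul_cancel₀ (ne_of_gt hms), Real.rpow_one]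
  rw [this]
  calc (∏ i, (hherm.eigenvalues i) ^ ((1:ℝ)/n)) ^ (n:ℕ) ≤ 1 ^ (n:ℕ) :=
        pow_le_pow_left₀ (Finset.prod_nonneg fun i _ => Real.rpow_nonneg (hnn i) _) key n
    _ = 1 := one_pow n

lemma det_sq_le_prod {n : ℕ} (hn : 0 < n) (T : Matrix (Fin n) (Fin n) ℝ) (c : Fin n → ℝ)
    (hrow : ∀ j, ∑ k, (T j k)^2 ≤ c j) : T.det ^ 2 ≤ ∏ j, c j := by
  have hc0 : ∀ j, 0 ≤ c j := fun j =>
    le_trans (Finset.sum_nonneg fun k _ => sq_nonneg _) (hrow j)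
  by_cases hz : ∃ j, c j = 0
  · obtain ⟨j, hj⟩ := hz
    have hTrow : ∀ k, T j k = 0 := by
      intro k
      have h1 : ∑ k, (T j k)^2 ≤ 0 := by rw [← hj]; exact hrow j
      have h2 : ∀ k ∈ Finset.univ, (0:ℝ) ≤ (T j k)^2 := fun k _ => sq_nonneg _
      have := (Finset.sum_eq_zero_iff_of_nonneg h2).mp
        (le_antisymm h1 (Finset.sum_nonneg h2))
      exact pow_eq_zero_iff (by norm_num) |>.mp (this k (Finset.mem_univ k))
    have : T.det = 0 := Matrix.det_eq_zero_of_row_eq_zero j hTrow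
    rw [this]
    simpa using Finset.prod_nonneg fun j _ => hc0 j
  · push_neg at hz
    have hcpos : ∀ j, 0 < c j := fun j => lt_of_le_of_ne (hc0 j) (Ne.symm (hz j))
    set D : Matrix (Fin n) (Fin n) ℝ := Matrix.diagonal (fun j => (Real.sqrt (c j))⁻¹) with hD
    set C : Matrix (Fin n) (Fin n) ℝ := D * T with hC
    have hCentry : ∀ j k, C j k = (Real.sqrt (c j))⁻¹ * T j k := by
      intro j k; rw [hC, Matrix.diagonal_mul]
    set H := C * Cᵀ with hH
    have hpsd : H.PosSemidef := by
      have := Matrix.posSemidef_self_mul_conjTranspose C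
      rwa [Matrix.conjTranspose_eq_transpose_of_trivial] at this
    have hHdiag : ∀ j, H j j ≤ 1 := by
      intro j
      have : H j j = (c j)⁻¹ * ∑ k, (T j k)^2 := by
        rw [hH]
        simp only [Matrix.mul_apply, Matrix.transpose_apply, hCentry]
        rw [Finset.mul_sum]
        congr 1; ext k
        rw [← Real.sqrt_inv]
        have : Real.sqrt (c j)⁻¹ * T j k * (Real.sqrt (c j)⁻¹ * T j k)
            = (Real.sqrt (c j)⁻¹)^2 * (T j k)^2 := by ring
        rw [this, Real.sq_sqrt (inv_nonneg.mpr (hc0 j))]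
      rw [this, inv_mul_le_iff₀ (hcpos j), mul_one]
      exact hrow j
    have htr : H.trace ≤ n := by
      rw [Matrix.trace]
      calc ∑ j, H.diag j ≤ ∑ _j : Fin n, (1:ℝ) := Finset.sum_le_sum fun j _ => hHdiag j
        _ = n := by simp
    have hdetH : H.det ≤ 1 := psd_det_le_one hn hpsd htr
    have hdetD : D.det = ∏ j, (Real.sqrt (c j))⁻¹ := by simp [hD, Matrix.det_diagonal]
    have hdetHval : H.det = (∏ j, (c j)⁻¹) * T.det ^ 2 := by
      rw [hH, Matrix.det_mul, Matrix.det_transpose, hC, Matrix.det_mul, hdetD]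
      have : (∏ j, (Real.sqrt (c j))⁻¹) ^ 2 = ∏ j, (c j)⁻¹ := by
        rw [← Finset.prod_pow]
        congr 1; ext j
        rw [← Real.sqrt_inv, Real.sq_sqrt (inv_nonneg.mpr (hc0 j))]
      nlinarith [this]
    have hprodpos : (0:ℝ) < ∏ j, c j := Finset.prod_pos fun j _ => hcpos j
    have : (∏ j, (c j)⁻¹) * T.det ^ 2 ≤ 1 := hdetHval ▸ hdetH
    have hinv : (∏ j, (c j)⁻¹) = (∏ j, c j)⁻¹ := by
      rw [Finset.prod_inv_distrib]
    rw [hinv] at this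
    calc T.det ^ 2 = (∏ j, c j) * ((∏ j, c j)⁻¹ * T.det ^ 2) := by
          field_simp
      _ ≤ (∏ j, c j) * 1 := mul_le_mul_of_nonneg_left this hprodpos.le
      _ = ∏ j, c j := mul_one _

lemma range_sum_vecMulVec {m : ℕ} (v : Fin m → (Fin m → ℝ)) (s : Finset (Fin m)) :
    LinearMap.range (∑ i ∈ s, vecMulVec (v i) (v i)).mulVecLin
      = Submodule.span ℝ (v '' ↑s) := by
  set A : Matrix {i // i ∈ s} (Fin m) ℝ := Matrix.of (fun i x => v i.1 x) with hA
  have hN : (∑ i ∈ s, vecMulVec (v i) (v i)) = Aᵀ * A := by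
    ext x y
    simp only [Matrix.sum_apply, Matrix.vecMulVec_apply, Matrix.mul_apply,
      Matrix.transpose_apply, hA, Matrix.of_apply]
    rw [← Finset.sum_coe_sort s (fun i => v i x * v i y)]
  have hrangeAT : LinearMap.range Aᵀ.mulVecLin = Submodule.span ℝ (v '' ↑s) := by
    rw [Matrix.range_mulVecLin]
    congr 1
    rw [Set.image_eq_range]
    rfl
  have hle : LinearMap.range (Aᵀ * A).mulVecLin ≤ LinearMap.range Aᵀ.mulVecLin := by
    rw [Matrix.mulVecLin_mul]
    exact LinearMap.range_comp_le_range _ _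
  have hrank : (Aᵀ * A).rank = Aᵀ.rank := by
    rw [Matrix.rank_transpose_mul_self, Matrix.rank_transpose]
  have : LinearMap.range (Aᵀ * A).mulVecLin = LinearMap.range Aᵀ.mulVecLin := by
    apply Submodule.eq_of_le_of_finrank_le hle
    exact le_of_eq hrank.symm
  rw [hN, this, hrangeAT]

lemma gram_eq {m : ℕ} (u : Fin m → (Fin m → ℝ)) :
    (∑ j, vecMulVec (u j) (u j)) = (Matrix.of u)ᵀ * (Matrix.of u) := by
  ext x y
  simp [Matrix.sum_apply, Matrix.vecMulVec_apply, Matrix.mul_apply]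

set_option maxHeartbeats 1000000 in
/-- The Galil–Kiefer greedy output `S_GK` has D-efficiency at least `1/m`:
`det(M(S_GK))^{1/m} ≥ (1/m)·det(M(S*))^{1/m}` where `S*` is a D-optimal
`m`-element subset of `F`. -/
theorem stmt10 (m : ℕ) (hm : 0 < m) (F : Set (Fin m → ℝ)) (hFfin : F.Finite)
    (hFspan : Submodule.span ℝ F = ⊤)
    (g : Fin m → (Fin m → ℝ))
    (P : Fin m → Matrix (Fin m) (Fin m) ℝ)
    (hPsymm : ∀ j, (P j)ᵀ = P j) (hPidem : ∀ j, P j * P j = P j)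
    (hPrange : ∀ j, LinearMap.range (P j).mulVecLin =
      LinearMap.range (∑ i ∈ Finset.univ.filter (· < j),
        vecMulVec (g i) (g i)).mulVecLin)
    (hgmem : ∀ j : Fin m, g j ∈ F \ (g '' {i : Fin m | i < j}))
    (hgmax : ∀ j : Fin m, ∀ f ∈ F \ (g '' {i : Fin m | i < j}),
      f ⬝ᵥ ((1 - P j) *ᵥ f) ≤ g j ⬝ᵥ ((1 - P j) *ᵥ g j))
    (gstar : Fin m → (Fin m → ℝ)) (hstarmem : ∀ j, gstar j ∈ F)
    (hstarinj : Function.Injective gstar)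
    (hstaropt : ∀ u : Fin m → (Fin m → ℝ), (∀ j, u j ∈ F) →
      Function.Injective u →
      (∑ j : Fin m, vecMulVec (u j) (u j)).det ≤
        (∑ j : Fin m, vecMulVec (gstar j) (gstar j)).det) :
    (∑ j : Fin m, vecMulVec (g j) (g j)).det ^ ((1 : ℝ) / m) ≥
      (1 / (m : ℝ)) *
        (∑ j : Fin m, vecMulVec (gstar j) (gstar j)).det ^ ((1 : ℝ) / m) := by
  classical
  set E : Fin m → Matrix (Fin m) (Fin m) ℝ := fun j => 1 - P j with hE
  have hEsymm : ∀ j, (E j)ᵀ = E j := by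
    intro j; simp [hE, Matrix.transpose_sub, hPsymm j]
  have hEidem : ∀ j, E j * E j = E j := by
    intro j
    show (1 - P j) * (1 - P j) = 1 - P j
    rw [sub_mul, one_mul, mul_sub, mul_one, hPidem, sub_self, sub_zero]
  -- dot product symmetry through E
  have hdotE : ∀ j (x y : Fin m → ℝ), x ⬝ᵥ (E j *ᵥ y) = (E j *ᵥ x) ⬝ᵥ y := by
    intro j x y
    rw [Matrix.dotProduct_mulVec, ← Matrix.vecMul_transpose, hEsymm j]
  have hself : ∀ j (f : Fin m → ℝ), f ⬝ᵥ (E j *ᵥ f) = (E j *ᵥ f) ⬝ᵥ (E j *ᵥ f) := by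
    intro j f
    conv_lhs => rw [← hEidem j, ← Matrix.mulVec_mulVec, hdotE]
  have hresnn : ∀ j (f : Fin m → ℝ), 0 ≤ f ⬝ᵥ (E j *ᵥ f) := by
    intro j f
    rw [hself]
    exact Finset.sum_nonneg fun i _ => mul_self_nonneg _
  set d : Fin m → ℝ := fun j => g j ⬝ᵥ (E j *ᵥ g j) with hd
  set V : Fin m → Submodule ℝ (Fin m → ℝ) :=
    fun j => Submodule.span ℝ (g '' {i : Fin m | i < j}) with hV
  have hrangeP : ∀ j, LinearMap.range (P j).mulVecLin = V j := by
    intro j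
    rw [hPrange j, range_sum_vecMulVec]
    congr 2
    ext i; simp
  have hPfix : ∀ j x, x ∈ V j → P j *ᵥ x = x := by
    intro j x hx
    rw [← hrangeP j] at hx
    obtain ⟨y, hy⟩ := hx
    simp only [Matrix.mulVecLin_apply] at hy
    rw [← hy, Matrix.mulVec_mulVec, hPidem]
  have hEzero : ∀ j x, x ∈ V j → E j *ᵥ x = 0 := by
    intro j x hx
    show (1 - P j) *ᵥ x = 0
    rw [Matrix.sub_mulVec, Matrix.one_mulVec, hPfix j x hx, sub_self]
  have hgV : ∀ {i j : Fin m}, i < j → g i ∈ V j := by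
    intro i j hij
    exact Submodule.subset_span ⟨i, hij, rfl⟩
  have hEg : ∀ {i j : Fin m}, i < j → E j *ᵥ g i = 0 :=
    fun hij => hEzero _ _ (hgV hij)
  -- residual of any f in F is at most d j
  have hresle : ∀ j, ∀ f ∈ F, f ⬝ᵥ (E j *ᵥ f) ≤ d j := by
    intro j f hf
    by_cases hfi : f ∈ g '' {i : Fin m | i < j}
    · obtain ⟨i, hij, rfl⟩ := hfi
      rw [hEg hij, dotProduct_zero]
      exact hresnn j (g j)
    · exact hgmax j f ⟨hf, hfi⟩
  -- positivity of d
  have hdpos : ∀ j, 0 < d j := by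
    intro j
    rcases lt_or_ge 0 (d j) with h | h
    · exact h
    exfalso
    have hFV : ∀ f ∈ F, f ∈ V j := by
      intro f hf
      by_cases hfi : f ∈ g '' {i : Fin m | i < j}
      · obtain ⟨i, hij, rfl⟩ := hfi
        exact hgV hij
      · have h0 : f ⬝ᵥ (E j *ᵥ f) = 0 :=
          le_antisymm ((hresle j f hf).trans h) (hresnn j f)
        rw [hself] at h0
        have hE0 : E j *ᵥ f = 0 := dotProduct_self_eq_zero.mp h0
        have : P j *ᵥ f = f := by
          have : (1 - P j) *ᵥ f = 0 := hE0
          rw [Matrix.sub_mulVec, Matrix.one_mulVec, sub_eq_zero] at this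
          exact this.symm
        rw [← hrangeP j]
        exact ⟨f, this⟩
    have htop : (⊤ : Submodule ℝ (Fin m → ℝ)) ≤ V j := by
      rw [← hFspan]
      exact Submodule.span_le.mpr hFV
    set t : Finset (Fin m → ℝ) := (Finset.univ.filter (· < j)).image g with ht
    have himg : g '' {i : Fin m | i < j} = ↑t := by
      rw [ht, Finset.coe_image]
      congr 1
      ext i
      simp
    have hfr1 : Module.finrank ℝ (V j) ≤ t.card := by
      show Module.finrank ℝ (Submodule.span ℝ (g '' {i : Fin m | i < j})) ≤ t.card
      rw [himg]
      exact finrank_span_finset_le_card t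
    have hfr2 : t.card < m := by
      calc t.card ≤ (Finset.univ.filter (· < j)).card := Finset.card_image_le
        _ < Finset.univ.card := by
            apply Finset.card_lt_card
            constructor
            · exact Finset.filter_subset _ _
            · intro hsub
              have := hsub (Finset.mem_univ j)
              simp at this
        _ = m := by simp
    have hfr3 : m ≤ Module.finrank ℝ (V j) := by
      calc m = Module.finrank ℝ (Fin m → ℝ) := by simp
        _ = Module.finrank ℝ (⊤ : Submodule ℝ (Fin m → ℝ)) := (finrank_top ℝ _).symm
        _ ≤ Module.finrank ℝ (V j) := Submodule.finrank_mono htop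
    omega
  -- the orthonormal directions
  set q : Fin m → (Fin m → ℝ) := fun j => (Real.sqrt (d j))⁻¹ • (E j *ᵥ g j) with hq
  have hsq : ∀ j, (Real.sqrt (d j))⁻¹ * (Real.sqrt (d j))⁻¹ = (d j)⁻¹ := by
    intro j
    rw [← mul_inv, Real.mul_self_sqrt (hdpos j).le]
  have hqdot : ∀ j (f : Fin m → ℝ), q j ⬝ᵥ f = (Real.sqrt (d j))⁻¹ * ((E j *ᵥ g j) ⬝ᵥ f) := by
    intro j f
    rw [hq]
    exact smul_dotProduct _ _ _
  -- key projection bound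
  have hqf : ∀ j (f : Fin m → ℝ), (q j ⬝ᵥ f)^2 ≤ f ⬝ᵥ (E j *ᵥ f) := by
    intro j f
    have h1 : (E j *ᵥ g j) ⬝ᵥ f = (E j *ᵥ g j) ⬝ᵥ (E j *ᵥ f) := by
      conv_lhs => rw [← hEidem j, ← Matrix.mulVec_mulVec]
      rw [← hdotE]
    have hCS : ((E j *ᵥ g j) ⬝ᵥ (E j *ᵥ f))^2 ≤
        ((E j *ᵥ g j) ⬝ᵥ (E j *ᵥ g j)) * ((E j *ᵥ f) ⬝ᵥ (E j *ᵥ f)) := by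
      have := Finset.sum_mul_sq_le_sq_mul_sq Finset.univ (E j *ᵥ g j) (E j *ᵥ f)
      simpa [dotProduct, pow_two] using this
    have hgd : (E j *ᵥ g j) ⬝ᵥ (E j *ᵥ g j) = d j := (hself j (g j)).symm
    have hfd : (E j *ᵥ f) ⬝ᵥ (E j *ᵥ f) = f ⬝ᵥ (E j *ᵥ f) := (hself j f).symm
    calc (q j ⬝ᵥ f)^2 = (d j)⁻¹ * ((E j *ᵥ g j) ⬝ᵥ (E j *ᵥ f))^2 := by
          rw [hqdot, h1, mul_pow, ← hsq j]; ring
      _ ≤ (d j)⁻¹ * (d j * (f ⬝ᵥ (E j *ᵥ f))) := by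
          apply mul_le_mul_of_nonneg_left _ (inv_nonneg.mpr (hdpos j).le)
          rw [← hgd, ← hfd]
          exact hCS
      _ = f ⬝ᵥ (E j *ᵥ f) := by
          rw [← mul_assoc, inv_mul_cancel₀ (hdpos j).ne', one_mul]
  have hqg0 : ∀ {i j : Fin m}, i < j → q j ⬝ᵥ g i = 0 := by
    intro i j hij
    rw [hqdot, ← hdotE, hEg hij, dotProduct_zero, mul_zero]
  have hqgd : ∀ j, q j ⬝ᵥ g j = Real.sqrt (d j) := by
    intro j
    have h1 : (E j *ᵥ g j) ⬝ᵥ g j = d j := (hdotE j (g j) (g j)).symm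
    rw [hqdot, h1]
    have hs : Real.sqrt (d j) ≠ 0 := ne_of_gt (Real.sqrt_pos.mpr (hdpos j))
    field_simp
    rw [Real.sq_sqrt (hdpos j).le]
  have hqq1 : ∀ j, q j ⬝ᵥ q j = 1 := by
    intro j
    rw [hqdot, hq]
    simp only [dotProduct_smul]
    rw [show (E j *ᵥ g j) ⬝ᵥ (E j *ᵥ g j) = d j from (hself j (g j)).symm]
    rw [smul_eq_mul, ← mul_assoc, hsq j]
    field_simp [(hdpos j).ne']
  have hqVlt : ∀ {i j : Fin m}, i < j → q i ∈ V j := by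
    intro i j hij
    rw [hq]
    show (Real.sqrt (d i))⁻¹ • (E i *ᵥ g i) ∈ V j
    apply Submodule.smul_mem
    have : E i *ᵥ g i = g i - P i *ᵥ g i := by
      show (1 - P i) *ᵥ g i = _
      rw [Matrix.sub_mulVec, Matrix.one_mulVec]
    rw [this]
    apply Submodule.sub_mem
    · exact hgV hij
    · have : P i *ᵥ g i ∈ V i := by
        rw [← hrangeP i]; exact ⟨g i, rfl⟩
      refine Submodule.span_mono ?_ this
      apply Set.image_mono
      intro k hk
      exact lt_trans hk hij
  have hqperp : ∀ {i j : Fin m}, i ≠ j → q i ⬝ᵥ q j = 0 := by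
    have key : ∀ {i j : Fin m}, i < j → q j ⬝ᵥ q i = 0 := by
      intro i j hij
      rw [hqdot, ← hdotE, hEzero j (q i) (hqVlt hij), dotProduct_zero, mul_zero]
    intro i j hij
    rcases lt_or_gt_of_ne hij with h | h
    · rw [dotProduct_comm]; exact key h
    · exact key h
  -- matrices
  set Q : Matrix (Fin m) (Fin m) ℝ := Matrix.of q with hQ
  have hQQ : Q * Qᵀ = 1 := by
    ext i k
    rw [Matrix.mul_apply]
    show (∑ x, q i x * q k x) = (1 : Matrix (Fin m) (Fin m) ℝ) i k
    by_cases h : i = k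
    · subst h
      rw [Matrix.one_apply_eq]
      exact hqq1 i
    · rw [Matrix.one_apply_ne h]
      exact hqperp h
  have hdetQ : Q.det * Q.det = 1 := by
    have := congrArg Matrix.det hQQ
    rwa [Matrix.det_mul, Matrix.det_transpose, Matrix.det_one] at this
  -- greedy determinant
  set A : Matrix (Fin m) (Fin m) ℝ := Matrix.of g with hA
  set T : Matrix (Fin m) (Fin m) ℝ := Q * Aᵀ with hT
  have hTentry : ∀ i k, T i k = q i ⬝ᵥ g k := by
    intro i k
    rw [hT, Matrix.mul_apply]
    rfl
  have htri : T.BlockTriangular id := by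
    intro i k hik
    rw [hTentry]
    exact hqg0 hik
  have hdetT : T.det = ∏ j, Real.sqrt (d j) := by
    rw [Matrix.det_of_upperTriangular htri]
    exact Finset.prod_congr rfl fun j _ => by rw [hTentry, hqgd]
  have hdetGK : (∑ j : Fin m, vecMulVec (g j) (g j)).det = ∏ j, d j := by
    rw [gram_eq g, ← hA, Matrix.det_mul, Matrix.det_transpose]
    have h1 : T.det * T.det = A.det * A.det := by
      rw [hT, Matrix.det_mul, Matrix.det_transpose]
      calc Q.det * A.det * (Q.det * A.det) = (Q.det * Q.det) * (A.det * A.det) := by ring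
        _ = A.det * A.det := by rw [hdetQ, one_mul]
    rw [← h1, hdetT, ← Finset.prod_mul_distrib]
    exact Finset.prod_congr rfl fun j _ => Real.mul_self_sqrt (hdpos j).le
  -- optimal determinant bound
  set B : Matrix (Fin m) (Fin m) ℝ := Matrix.of gstar with hB
  set Ts : Matrix (Fin m) (Fin m) ℝ := Q * Bᵀ with hTs
  have hTsentry : ∀ i k, Ts i k = q i ⬝ᵥ gstar k := by
    intro i k
    rw [hTs, Matrix.mul_apply]
    rfl
  have hdetstar : (∑ j : Fin m, vecMulVec (gstar j) (gstar j)).det = Ts.det ^ 2 := by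
    rw [gram_eq gstar, ← hB, Matrix.det_mul, Matrix.det_transpose]
    rw [hTs, Matrix.det_mul, Matrix.det_transpose]
    calc B.det * B.det = (Q.det * Q.det) * (B.det * B.det) := by rw [hdetQ, one_mul]
      _ = (Q.det * B.det) ^ 2 := by ring
  have hrowb : ∀ j, ∑ k, (Ts j k)^2 ≤ (m : ℝ) * d j := by
    intro j
    calc ∑ k, (Ts j k)^2 ≤ ∑ _k : Fin m, d j := by
          apply Finset.sum_le_sum
          intro k _
          rw [hTsentry]
          exact (hqf j (gstar k)).trans (hresle j (gstar k) (hstarmem k))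
      _ = (m : ℝ) * d j := by simp [Finset.sum_const, Finset.card_univ, mul_comm]
  have hstarbound : (∑ j : Fin m, vecMulVec (gstar j) (gstar j)).det ≤
      (m : ℝ)^m * ∏ j, d j := by
    rw [hdetstar]
    calc Ts.det ^ 2 ≤ ∏ j, (m : ℝ) * d j := det_sq_le_prod hm Ts _ hrowb
      _ = (m : ℝ)^m * ∏ j, d j := by
          rw [Finset.prod_mul_distrib, Finset.prod_const, Finset.card_univ, Fintype.card_fin]
  -- final rpow computation
  have hapos : 0 < (∑ j : Fin m, vecMulVec (g j) (g j)).det := by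
    rw [hdetGK]
    exact Finset.prod_pos fun j _ => hdpos j
  have hbnn : 0 ≤ (∑ j : Fin m, vecMulVec (gstar j) (gstar j)).det := by
    rw [hdetstar]
    exact sq_nonneg _
  have hba : (∑ j : Fin m, vecMulVec (gstar j) (gstar j)).det ≤
      (m : ℝ)^m * (∑ j : Fin m, vecMulVec (g j) (g j)).det := by
    rw [hdetGK]
    exact hstarbound
  have hmpos : (0:ℝ) < m := by exact_mod_cast hm
  set a := (∑ j : Fin m, vecMulVec (g j) (g j)).det
  set b := (∑ j : Fin m, vecMulVec (gstar j) (gstar j)).det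
  have key : b ^ ((1:ℝ)/m) ≤ (m : ℝ) * a ^ ((1:ℝ)/m) := by
    have h1 : b ^ ((1:ℝ)/m) ≤ ((m : ℝ)^m * a) ^ ((1:ℝ)/m) :=
      Real.rpow_le_rpow hbnn hba (by positivity)
    have h2 : ((m : ℝ)^m * a) ^ ((1:ℝ)/m) = (m : ℝ) * a ^ ((1:ℝ)/m) := by
      rw [Real.mul_rpow (by positivity) hapos.le]
      congr 1
      rw [← Real.rpow_natCast (m:ℝ) m, ← Real.rpow_mul hmpos.le]
      rw [mul_one_div, div_self (ne_of_gt hmpos), Real.rpow_one]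
    rwa [h2] at h1
  rw [ge_iff_le]
  calc 1 / (m:ℝ) * b ^ ((1:ℝ)/m) ≤ 1 / (m:ℝ) * ((m:ℝ) * a ^ ((1:ℝ)/m)) :=
        mul_le_mul_of_nonneg_left key (by positivity)
    _ = a ^ ((1:ℝ)/m) := by
        rw [← mul_assoc, one_div, inv_mul_cancel₀ (ne_of_gt hmpos), one_mul]
end

section
/- Let F ⊂ R^m be a finite spanning set and let S_KY be the m-element subset of F produced by the (modified) Kumar–Yildirim method, in which at step j a direction b is chosen from the orthogonal complement of span(S_j) and f_{(j)} maximizes |f'b| over F \ S_j. Then det(M(S_KY))^{1/m} ≥ (π / (4m Γ(1+m/2)^{2/m})) · det(M(S*))^{1/m}, where S* is the D-optimal m-element subset. -/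
open Matrix Real


lemma gq_aux (n : ℕ) : Real.Gamma ((n+2)/2)^2 * π^n ≤ ((n:ℝ)+1)^(n+1) ∧
    Real.Gamma ((n+3)/2)^2 * π^(n+1) ≤ ((n:ℝ)+2)^(n+2) := by
  induction n with
  | zero =>
    constructor
    · norm_num [show ((0:ℕ)+2:ℝ)/2 = 1 by norm_num, Real.Gamma_one]
    · have h32 : Real.Gamma ((((0:ℕ):ℝ)+3)/2) = (1/2) * Real.sqrt π := by
        have h := Real.Gamma_add_one (s := 1/2) (by norm_num)
        rw [show (1:ℝ)/2 + 1 = 3/2 by norm_num, Real.Gamma_one_half_eq] at h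
        rw [show (((0:ℕ):ℝ)+3)/2 = 3/2 by norm_num, h]
      rw [h32]
      have hs : Real.sqrt π ^ 2 = π := Real.sq_sqrt Real.pi_pos.le
      have hpi : π < 3.15 := Real.pi_lt_d2
      have hpi0 : (0:ℝ) < π := Real.pi_pos
      norm_num
      nlinarith [hs, hpi, hpi0]
  | succ n ih =>
    constructor
    · have h2 := ih.2
      push_cast
      rw [show ((n:ℝ)+1+2) = (n:ℝ)+3 by ring, show ((n:ℝ)+1+1) = (n:ℝ)+2 by ring]
      exact h2
    · have h1 := ih.1
      push_cast at h1 ⊢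
      set M : ℝ := (n:ℝ) + 1 with hM
      have hM0 : (0:ℝ) < M := by positivity
      rw [show ((n:ℝ)+1+3)/2 = (M+1)/2 + 1 by rw [hM]; ring,
        Real.Gamma_add_one (by positivity : ((M:ℝ)+1)/2 ≠ 0)]
      have h1' : Real.Gamma ((M+1)/2)^2 * π^n ≤ M^(n+1) := by
        rw [hM]; convert h1 using 3; push_cast; ring
      have hb : (3:ℝ) ≤ (1 + 2/M)^(n+1) := by
        have h := one_add_mul_le_pow (a := 2/M) (le_trans (by norm_num : (-2:ℝ) ≤ 0) (by positivity)) (n+1)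
        have he : ((n:ℕ)+1 : ℝ) * (2/M) = 2 := by rw [hM]; field_simp
        push_cast at h
        linarith
      have hb' : 3 * M^(n+1) ≤ (M+2)^(n+1) := by
        have h := mul_le_mul_of_nonneg_right hb (le_of_lt (pow_pos hM0 (n+1)))
        have he : (1 + 2/M)^(n+1) * M^(n+1) = (M+2)^(n+1) := by
          rw [← mul_pow]; congr 1; field_simp
        linarith [he ▸ h]
      have hpi : π < 3.15 := Real.pi_lt_d2
      have hpi0 : (0:ℝ) < π := Real.pi_pos
      have hpi2 : π^2 ≤ 9.9225 := by nlinarith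
      have hM12 : (M+1)^2 ≤ (M+2)^2 := by nlinarith
      calc ((M+1)/2 * Real.Gamma ((M+1)/2))^2 * π^(n+1+1)
          = ((M+1)^2/4 * π^2) * (Real.Gamma ((M+1)/2)^2 * π^n) := by ring
        _ ≤ ((M+1)^2/4 * π^2) * M^(n+1) := by
            apply mul_le_mul_of_nonneg_left h1' (by positivity)
        _ ≤ ((M+2)^2 * 3) * M^(n+1) := by
            apply mul_le_mul_of_nonneg_right _ (le_of_lt (pow_pos hM0 (n+1)))
            nlinarith [sq_nonneg (M+1), sq_nonneg (M+2)]
        _ = (M+2)^2 * (3 * M^(n+1)) := by ring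
        _ ≤ (M+2)^2 * (M+2)^(n+1) := by
            apply mul_le_mul_of_nonneg_left hb' (by positivity)
        _ = (M+2)^(n+1+2) := by ring

lemma const_ineq (m : ℕ) (hm : 0 < m) :
    π^m * ((m.factorial : ℝ))^2 ≤ (4*(m:ℝ))^m * Real.Gamma (1 + (m:ℝ)/2)^2 := by
  obtain ⟨n, rfl⟩ : ∃ n, m = n + 1 := ⟨m - 1, (Nat.succ_pred_eq_of_pos hm).symm⟩
  have hd := Real.Gamma_mul_Gamma_add_half ((((n+1:ℕ):ℝ)+1)/2)
  rw [show (((n+1:ℕ):ℝ)+1)/2 + 1/2 = 1 + ((n+1:ℕ):ℝ)/2 by push_cast; ring,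
    show 2*((((n+1:ℕ):ℝ)+1)/2) = ((n+1:ℕ):ℝ)+1 by push_cast; ring,
    Real.Gamma_nat_eq_factorial (n+1),
    show (1:ℝ) - (((n+1:ℕ):ℝ)+1) = -((n+1:ℕ):ℝ) by push_cast; ring,
    Real.rpow_neg (by norm_num : (0:ℝ) ≤ 2), Real.rpow_natCast] at hd
  set Γ₁ := Real.Gamma ((((n+1:ℕ):ℝ)+1)/2) with hΓ₁
  set Γ₂ := Real.Gamma (1 + ((n+1:ℕ):ℝ)/2) with hΓ₂
  set f := (((n+1).factorial : ℕ):ℝ) with hf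
  -- square the duplication formula
  have hsq : Γ₁^2 * Γ₂^2 = f^2 * ((2:ℝ)^(n+1))⁻¹^2 * π := by
    have h := congrArg (· ^ 2) hd
    simp only [mul_pow] at h
    rw [Real.sq_sqrt Real.pi_pos.le] at h
    linarith [h]
  have h4 : ((2:ℝ)^(n+1))⁻¹^2 * 4^(n+1) = 1 := by
    rw [← inv_pow, pow_right_comm, ← mul_pow]
    norm_num
  have hfac : f^2 * π = Γ₁^2 * Γ₂^2 * 4^(n+1) := by
    rw [hsq, show f^2*((2:ℝ)^(n+1))⁻¹^2*π*4^(n+1) = f^2*π*(((2:ℝ)^(n+1))⁻¹^2*4^(n+1)) from by ring, h4, mul_one]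
  have hq := (gq_aux n).1
  have hΓeq : Real.Gamma (((n:ℝ)+2)/2) = Γ₁ := by
    rw [hΓ₁]; push_cast; ring_nf
  rw [hΓeq] at hq
  calc π^(n+1) * f^2 = (f^2 * π) * π^n := by ring
    _ = (Γ₁^2*Γ₂^2*4^(n+1)) * π^n := by rw [hfac]
    _ = (Γ₁^2*π^n) * (Γ₂^2*4^(n+1)) := by ring
    _ ≤ ((n:ℝ)+1)^(n+1) * (Γ₂^2*4^(n+1)) := by
        apply mul_le_mul_of_nonneg_right hq (by positivity)
    _ = (4*((n:ℝ)+1))^(n+1) * Γ₂^2 := by rw [mul_pow]; ring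
    _ = (4*(((n+1:ℕ)):ℝ))^(n+1) * Γ₂^2 := by norm_num

lemma det_abs_le (m : ℕ) (P : Matrix (Fin m) (Fin m) ℝ) (c : Fin m → ℝ)
    (h : ∀ i k, |P i k| ≤ c k) :
    |P.det| ≤ (m.factorial : ℝ) * ∏ k, c k := by
  rw [Matrix.det_apply]
  calc |∑ σ : Equiv.Perm (Fin m), Equiv.Perm.sign σ • ∏ i, P (σ i) i|
      ≤ ∑ σ : Equiv.Perm (Fin m), |Equiv.Perm.sign σ • ∏ i, P (σ i) i| :=
        Finset.abs_sum_le_sum_abs _ _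
    _ = ∑ σ : Equiv.Perm (Fin m), |∏ i, P (σ i) i| := by
        refine Finset.sum_congr rfl fun σ _ => ?_
        rcases Int.units_eq_one_or (Equiv.Perm.sign σ) with hs | hs <;> simp [hs]
    _ ≤ ∑ _σ : Equiv.Perm (Fin m), ∏ k, c k := by
        refine Finset.sum_le_sum fun σ _ => ?_
        rw [Finset.abs_prod]
        exact Finset.prod_le_prod (fun i _ => abs_nonneg _) (fun i _ => h (σ i) i)
    _ = (m.factorial : ℝ) * ∏ k, c k := by
        rw [Finset.sum_const, Finset.card_univ, Fintype.card_perm, Fintype.card_fin,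
          nsmul_eq_mul]


/-- D-efficiency bound for the modified Kumar–Yildirim method: if at each step
`j` a nonzero direction `b j` orthogonal to the span of previously chosen
vectors is used and `g j ∈ F \ S_j` maximizes `|f ⬝ b j|`, then
`det(M(S_KY))^{1/m} ≥ (π/(4m·Γ(1+m/2)^{2/m}))·det(M(S*))^{1/m}`. -/
theorem stmt13 (m : ℕ) (hm : 0 < m) (F : Set (Fin m → ℝ)) (hFfin : F.Finite)
    (hFspan : Submodule.span ℝ F = ⊤)
    (g : Fin m → (Fin m → ℝ)) (b : Fin m → (Fin m → ℝ))
    (hbne : ∀ j, b j ≠ 0)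
    (hborth : ∀ j : Fin m, ∀ v ∈ Submodule.span ℝ (g '' {i : Fin m | i < j}),
      b j ⬝ᵥ v = 0)
    (hgmem : ∀ j : Fin m, g j ∈ F \ (g '' {i : Fin m | i < j}))
    (hgmax : ∀ j : Fin m, ∀ f ∈ F \ (g '' {i : Fin m | i < j}),
      |f ⬝ᵥ b j| ≤ |g j ⬝ᵥ b j|)
    (gstar : Fin m → (Fin m → ℝ)) (hstarmem : ∀ j, gstar j ∈ F)
    (hstarinj : Function.Injective gstar)
    (hstaropt : ∀ u : Fin m → (Fin m → ℝ), (∀ j, u j ∈ F) →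
      Function.Injective u →
      (∑ j : Fin m, vecMulVec (u j) (u j)).det ≤
        (∑ j : Fin m, vecMulVec (gstar j) (gstar j)).det) :
    (∑ j : Fin m, vecMulVec (g j) (g j)).det ^ ((1 : ℝ) / m) ≥
      (π / (4 * m * Real.Gamma (1 + m / 2) ^ ((2 : ℝ) / m))) *
        (∑ j : Fin m, vecMulVec (gstar j) (gstar j)).det ^ ((1 : ℝ) / m) := by
  classical
  have hmR : (0:ℝ) < m := by exact_mod_cast hm
  set G : Matrix (Fin m) (Fin m) ℝ := Matrix.of g with hGdef
  set U : Matrix (Fin m) (Fin m) ℝ := Matrix.of gstar with hUdef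
  set Bm : Matrix (Fin m) (Fin m) ℝ := Matrix.of b with hBdef
  have hMsum : ∀ u : Fin m → (Fin m → ℝ),
      (∑ j : Fin m, vecMulVec (u j) (u j)) = (Matrix.of u)ᵀ * (Matrix.of u) := by
    intro u; ext i k
    simp [Matrix.mul_apply, Matrix.sum_apply, vecMulVec_apply, Matrix.transpose_apply]
  have hdetg : (∑ j : Fin m, vecMulVec (g j) (g j)).det = G.det ^ 2 := by
    rw [hMsum g, det_mul, det_transpose, sq]
  have hdetu : (∑ j : Fin m, vecMulVec (gstar j) (gstar j)).det = U.det ^ 2 := by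
    rw [hMsum gstar, det_mul, det_transpose, sq]
  have horthf : ∀ (k : Fin m), ∀ f ∈ g '' {i : Fin m | i < k}, b k ⬝ᵥ f = 0 :=
    fun k f hf => hborth k f (Submodule.subset_span hf)
  -- nondegeneracy
  have hdz : ∀ k, g k ⬝ᵥ b k ≠ 0 := by
    intro k h0
    have hall : ∀ f ∈ F, b k ⬝ᵥ f = 0 := by
      intro f hf
      by_cases hmem : f ∈ g '' {i : Fin m | i < k}
      · exact horthf k f hmem
      · have h1 := hgmax k f ⟨hf, hmem⟩
        rw [h0, abs_zero] at h1
        rw [dotProduct_comm]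
        exact abs_eq_zero.mp (le_antisymm h1 (abs_nonneg _))
    let φ : (Fin m → ℝ) →ₗ[ℝ] ℝ :=
      { toFun := fun v => b k ⬝ᵥ v
        map_add' := fun x y => by simp [dotProduct, mul_add, Finset.sum_add_distrib]
        map_smul' := fun r x => by
          simp [dotProduct, Finset.mul_sum, mul_left_comm, mul_comm] }
    have hbk : b k ⬝ᵥ b k = 0 := by
      have hbmem : b k ∈ Submodule.span ℝ F := by rw [hFspan]; trivial
      have hle : Submodule.span ℝ F ≤ LinearMap.ker φ :=
        Submodule.span_le.mpr fun f hf => LinearMap.mem_ker.mpr (hall f hf)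
      exact hle hbmem
    exact hbne k (dotProduct_self_eq_zero.mp hbk)
  -- G * Bmᵀ is lower triangular
  have hT : ∀ i k : Fin m, (G * Bmᵀ) i k = g i ⬝ᵥ b k := by
    intro i k; simp [Matrix.mul_apply, dotProduct, Matrix.transpose_apply, hGdef, hBdef]
  have hTtri : (G * Bmᵀ).BlockTriangular OrderDual.toDual := by
    intro i k hik
    rw [hT, dotProduct_comm]
    exact horthf k (g i) ⟨i, hik, rfl⟩
  have hdetT : (G * Bmᵀ).det = ∏ k, g k ⬝ᵥ b k := by
    rw [Matrix.det_of_lowerTriangular _ hTtri]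
    exact Finset.prod_congr rfl fun k _ => hT k k
  have hGB : G.det * Bm.det = ∏ k, g k ⬝ᵥ b k := by
    rw [← hdetT, det_mul, det_transpose]
  have hBne : Bm.det ≠ 0 := by
    intro h
    rw [h, mul_zero] at hGB
    exact Finset.prod_ne_zero_iff.mpr (fun k _ => hdz k) hGB.symm
  -- bound on U * Bmᵀ
  have hPd : ∀ i k : Fin m, (U * Bmᵀ) i k = gstar i ⬝ᵥ b k := by
    intro i k; simp [Matrix.mul_apply, dotProduct, Matrix.transpose_apply, hUdef, hBdef]
  have hPb : ∀ i k : Fin m, |(U * Bmᵀ) i k| ≤ |g k ⬝ᵥ b k| := by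
    intro i k; rw [hPd]
    by_cases hmem : gstar i ∈ g '' {i' : Fin m | i' < k}
    · rw [dotProduct_comm, horthf k _ hmem, abs_zero]
      exact abs_nonneg _
    · exact hgmax k _ ⟨hstarmem i, hmem⟩
  have hUB : |(U * Bmᵀ).det| ≤ (m.factorial : ℝ) * ∏ k, |g k ⬝ᵥ b k| :=
    det_abs_le m _ _ hPb
  have hUG : |U.det| ≤ (m.factorial : ℝ) * |G.det| := by
    have hEq : |U.det| * |Bm.det| = |(U * Bmᵀ).det| := by
      rw [det_mul, det_transpose, abs_mul]
    have h1 : |U.det| * |Bm.det| ≤ ((m.factorial : ℝ) * |G.det|) * |Bm.det| := by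
      rw [hEq]
      calc |(U * Bmᵀ).det| ≤ (m.factorial : ℝ) * ∏ k, |g k ⬝ᵥ b k| := hUB
        _ = (m.factorial : ℝ) * |∏ k, g k ⬝ᵥ b k| := by rw [Finset.abs_prod]
        _ = (m.factorial : ℝ) * |G.det * Bm.det| := by rw [hGB]
        _ = ((m.factorial : ℝ) * |G.det|) * |Bm.det| := by rw [abs_mul]; ring
    exact le_of_mul_le_mul_right h1 (abs_pos.mpr hBne)
  have hdetIneq : U.det ^ 2 ≤ (m.factorial : ℝ) ^ 2 * G.det ^ 2 := by
    have h2 := pow_le_pow_left₀ (abs_nonneg U.det) hUG 2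
    rwa [sq_abs, mul_pow, sq_abs] at h2
  -- rpow part
  set Γ₂ := Real.Gamma (1 + (m:ℝ)/2) with hΓ₂
  have hΓpos : 0 < Γ₂ := Real.Gamma_pos_of_pos (by positivity)
  set c := π / (4 * (m:ℝ) * Γ₂ ^ ((2:ℝ)/(m:ℝ))) with hc
  have hrp : 0 < Γ₂ ^ ((2:ℝ)/(m:ℝ)) := Real.rpow_pos_of_pos hΓpos _
  have hden : 0 < 4 * (m:ℝ) * Γ₂ ^ ((2:ℝ)/(m:ℝ)) := by positivity
  have hcpos : 0 < c := div_pos Real.pi_pos hden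
  have hpowΓ : (Γ₂ ^ ((2:ℝ)/(m:ℝ))) ^ m = Γ₂ ^ 2 := by
    rw [← Real.rpow_natCast (Γ₂ ^ ((2:ℝ)/(m:ℝ))) m, ← Real.rpow_mul hΓpos.le,
      div_mul_cancel₀ _ (ne_of_gt hmR),
      show (2:ℝ) = ((2:ℕ):ℝ) by norm_num, Real.rpow_natCast]
  have hcm : c ^ m * (m.factorial : ℝ) ^ 2 ≤ 1 := by
    rw [hc, div_pow, mul_pow, hpowΓ, div_mul_eq_mul_div, div_le_one (by positivity)]
    exact const_ineq m hm
  set A := (∑ j : Fin m, vecMulVec (g j) (g j)).det with hA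
  set B := (∑ j : Fin m, vecMulVec (gstar j) (gstar j)).det with hB
  have hBnn : 0 ≤ B := by rw [hdetu]; positivity
  have hprod : c ^ m * B ≤ A := by
    rw [hdetg, hdetu]
    nlinarith [hdetIneq, hcm, sq_nonneg G.det, pow_pos hcpos m, sq_nonneg U.det,
      pow_nonneg hcpos.le m]
  rw [ge_iff_le]
  have hfin : c * B ^ ((1:ℝ)/m) = (c ^ m * B) ^ ((1:ℝ)/m) := by
    rw [Real.mul_rpow (pow_nonneg hcpos.le m) hBnn]
    congr 1
    rw [← Real.rpow_natCast c m, ← Real.rpow_mul hcpos.le,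
      show (m:ℝ) * ((1:ℝ)/m) = 1 by field_simp, Real.rpow_one]
  calc c * B ^ ((1:ℝ)/m) = (c ^ m * B) ^ ((1:ℝ)/m) := hfin
    _ ≤ A ^ ((1:ℝ)/m) := Real.rpow_le_rpow (by positivity) hprod (by positivity)
end

section
/- Let V be an m×r real matrix of rank r < m, M = VV', P the orthogonal projector onto the column space of M, and M^+ the Moore–Penrose pseudoinverse of M. Then for f ∈ R^m with f'(I_m − P)f > 0, the sum of the reciprocals of the r+1 largest eigenvalues of M + ff' equals tr((V'V)^{-1}) + (1 + f'M^+f) / (f'(I_m − P)f). -/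
open Matrix Finset

/-- Matrices are equal if they act equally on all vectors. -/
lemma aux_ext_mulVec {m n : Type*} [Fintype n] [DecidableEq n]
    (A B : Matrix m n ℝ) (h : ∀ x, A *ᵥ x = B *ᵥ x) : A = B := by
  ext i j
  have := congrFun (h (Pi.single j 1)) i
  simpa [Matrix.mulVec_single_one] using this

/-- Uniqueness of the Moore–Penrose pseudoinverse. -/
lemma aux_pinv_unique {n : Type*} [Fintype n] (A C₁ C₂ : Matrix n n ℝ)
    (h1 : A * C₁ * A = A) (h2 : C₁ * A * C₁ = C₁)
    (h3 : (A * C₁)ᵀ = A * C₁) (h4 : (C₁ * A)ᵀ = C₁ * A)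
    (g1 : A * C₂ * A = A) (g2 : C₂ * A * C₂ = C₂)
    (g3 : (A * C₂)ᵀ = A * C₂) (g4 : (C₂ * A)ᵀ = C₂ * A) : C₁ = C₂ := by
  have e1 : A * C₁ = A * C₂ := by
    calc A * C₁ = (A * C₁)ᵀ := h3.symm
    _ = C₁ᵀ * Aᵀ := by rw [transpose_mul]
    _ = C₁ᵀ * (A * C₂ * A)ᵀ := by rw [g1]
    _ = C₁ᵀ * (Aᵀ * (A * C₂)ᵀ) := by rw [transpose_mul]
    _ = (C₁ᵀ * Aᵀ) * (A * C₂) := by rw [g3, mul_assoc]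
    _ = (A * C₁)ᵀ * (A * C₂) := by rw [transpose_mul]
    _ = (A * C₁) * (A * C₂) := by rw [h3]
    _ = (A * C₁ * A) * C₂ := by noncomm_ring
    _ = A * C₂ := by rw [h1]
  have e2 : C₁ * A = C₂ * A := by
    calc C₁ * A = (C₁ * A)ᵀ := h4.symm
    _ = Aᵀ * C₁ᵀ := by rw [transpose_mul]
    _ = (A * (C₂ * A))ᵀ * C₁ᵀ := by rw [← mul_assoc, g1]
    _ = ((C₂ * A)ᵀ * Aᵀ) * C₁ᵀ := by rw [transpose_mul]
    _ = (C₂ * A) * (Aᵀ * C₁ᵀ) := by rw [g4, mul_assoc]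
    _ = (C₂ * A) * (C₁ * A)ᵀ := by rw [transpose_mul]
    _ = C₂ * (A * (C₁ * A)) := by rw [h4, mul_assoc]
    _ = C₂ * A := by rw [← mul_assoc A C₁ A, h1]
  calc C₁ = C₁ * A * C₁ := h2.symm
  _ = C₂ * A * C₁ := by rw [e2]
  _ = C₂ * (A * C₁) := by noncomm_ring
  _ = C₂ * (A * C₂) := by rw [e1]
  _ = C₂ * A * C₂ := by noncomm_ring
  _ = C₂ := g2

/-- The four Penrose conditions for the explicit pseudoinverse of `B * Bᵀ`. -/
lemma aux_pinv_conds {m n : Type*} [Fintype m] [Fintype n] [DecidableEq n]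
    (B : Matrix m n ℝ) (h : IsUnit (Bᵀ * B)) :
    (B * Bᵀ) * (B * ((Bᵀ * B)⁻¹ * ((Bᵀ * B)⁻¹ * Bᵀ))) * (B * Bᵀ) = B * Bᵀ ∧
    (B * ((Bᵀ * B)⁻¹ * ((Bᵀ * B)⁻¹ * Bᵀ))) * (B * Bᵀ) * (B * ((Bᵀ * B)⁻¹ * ((Bᵀ * B)⁻¹ * Bᵀ)))
      = B * ((Bᵀ * B)⁻¹ * ((Bᵀ * B)⁻¹ * Bᵀ)) ∧
    ((B * Bᵀ) * (B * ((Bᵀ * B)⁻¹ * ((Bᵀ * B)⁻¹ * Bᵀ))))ᵀ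
      = (B * Bᵀ) * (B * ((Bᵀ * B)⁻¹ * ((Bᵀ * B)⁻¹ * Bᵀ))) ∧
    ((B * ((Bᵀ * B)⁻¹ * ((Bᵀ * B)⁻¹ * Bᵀ))) * (B * Bᵀ))ᵀ
      = (B * ((Bᵀ * B)⁻¹ * ((Bᵀ * B)⁻¹ * Bᵀ))) * (B * Bᵀ) := by
  set W := Bᵀ * B with hW
  have hdet : IsUnit W.det := (isUnit_iff_isUnit_det W).mp h
  have h1 : W * W⁻¹ = 1 := mul_nonsing_inv W hdet
  have h2 : W⁻¹ * W = 1 := nonsing_inv_mul W hdet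
  have hWt : Wᵀ = W := by rw [hW, transpose_mul, transpose_transpose]
  have hWit : W⁻¹ᵀ = W⁻¹ := by rw [transpose_nonsing_inv, hWt]
  have e0 : ∀ X : Matrix n m ℝ, Bᵀ * (B * X) = W * X := fun X => by
    rw [← Matrix.mul_assoc, ← hW]
  have q1 : ∀ X : Matrix n m ℝ, W * (W⁻¹ * X) = X := fun X => by
    rw [← Matrix.mul_assoc, h1, Matrix.one_mul]
  have q2 : ∀ X : Matrix n m ℝ, W⁻¹ * (W * X) = X := fun X => by
    rw [← Matrix.mul_assoc, h2, Matrix.one_mul]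
  have hAC : (B * Bᵀ) * (B * (W⁻¹ * (W⁻¹ * Bᵀ))) = B * (W⁻¹ * Bᵀ) := by
    simp only [Matrix.mul_assoc]
    rw [e0 (W⁻¹ * (W⁻¹ * Bᵀ)), q1 (W⁻¹ * Bᵀ)]
  have hCA : (B * (W⁻¹ * (W⁻¹ * Bᵀ))) * (B * Bᵀ) = B * (W⁻¹ * Bᵀ) := by
    simp only [Matrix.mul_assoc]
    rw [e0 Bᵀ, q2 Bᵀ]
  have hsymm : (B * (W⁻¹ * Bᵀ))ᵀ = B * (W⁻¹ * Bᵀ) := by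
    rw [transpose_mul, transpose_mul, transpose_transpose, hWit, Matrix.mul_assoc]
  refine ⟨?_, ?_, ?_, ?_⟩
  · rw [hAC]
    simp only [Matrix.mul_assoc]
    rw [e0 Bᵀ, q2 Bᵀ]
  · rw [hCA]
    simp only [Matrix.mul_assoc]
    rw [e0 (W⁻¹ * (W⁻¹ * Bᵀ)), q2 (W⁻¹ * (W⁻¹ * Bᵀ))]
  · rw [hAC, hsymm]
  · rw [hCA, hsymm]

/-- A symmetric idempotent matrix is determined by its range. -/
lemma aux_proj_unique {n : Type*} [Fintype n] [DecidableEq n] (P Q : Matrix n n ℝ)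
    (hPt : Pᵀ = P) (hPi : P * P = P) (hQt : Qᵀ = Q) (hQi : Q * Q = Q)
    (hrange : LinearMap.range P.mulVecLin = LinearMap.range Q.mulVecLin) : P = Q := by
  have h1 : P * Q = Q := by
    apply aux_ext_mulVec
    intro x
    rw [← Matrix.mulVec_mulVec]
    obtain ⟨y, hy⟩ : Q *ᵥ x ∈ LinearMap.range P.mulVecLin := by
      rw [hrange]; exact ⟨x, rfl⟩
    have hy' : P.mulVecLin y = P *ᵥ y := rfl
    rw [← hy, hy', Matrix.mulVec_mulVec, hPi]
  have h2 : Q * P = P := by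
    apply aux_ext_mulVec
    intro x
    rw [← Matrix.mulVec_mulVec]
    obtain ⟨y, hy⟩ : P *ᵥ x ∈ LinearMap.range Q.mulVecLin := by
      rw [← hrange]; exact ⟨x, rfl⟩
    have hy' : Q.mulVecLin y = Q *ᵥ y := rfl
    rw [← hy, hy', Matrix.mulVec_mulVec, hQi]
  calc P = (Q * P)ᵀ := by rw [h2, hPt]
  _ = Pᵀ * Qᵀ := by rw [transpose_mul]
  _ = P * Q := by rw [hPt, hQt]
  _ = Q := h1

/-- The spectral pseudoinverse of a real symmetric matrix. -/
lemma aux_spectral {m : ℕ} (A : Matrix (Fin m) (Fin m) ℝ) (hA : A.IsHermitian) :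
    ∃ Ap : Matrix (Fin m) (Fin m) ℝ,
      A * Ap * A = A ∧ Ap * A * Ap = Ap ∧ (A * Ap)ᵀ = A * Ap ∧ (Ap * A)ᵀ = Ap * A ∧
      Ap.trace = ∑ i, (hA.eigenvalues i)⁻¹ := by
  obtain ⟨lam, hlam⟩ : ∃ l, l = hA.eigenvalues := ⟨_, rfl⟩
  set U : Matrix (Fin m) (Fin m) ℝ := (hA.eigenvectorUnitary : Matrix (Fin m) (Fin m) ℝ) with hU
  have hmem := hA.eigenvectorUnitary.2
  rw [Matrix.mem_unitaryGroup_iff] at hmem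
  have hmem' := hA.eigenvectorUnitary.2
  rw [Matrix.mem_unitaryGroup_iff'] at hmem'
  have hsUU : star U * U = 1 := hmem'
  have hUsU : U * star U = 1 := hmem
  have hspec : A = U * diagonal lam * star U := by
    rw [hlam]
    have := hA.spectral_theorem
    simpa [RCLike.ofReal_real_eq_id] using this
  have conj : ∀ X Y : Matrix (Fin m) (Fin m) ℝ,
      (U * X * star U) * (U * Y * star U) = U * (X * Y) * star U := by
    intro X Y
    simp only [Matrix.mul_assoc]
    rw [← Matrix.mul_assoc (star U) U, hsUU, Matrix.one_mul]
  have hstar : ∀ X : Matrix (Fin m) (Fin m) ℝ, Xᵀ = star X := fun X => by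
    rw [← conjTranspose_eq_transpose_of_trivial, Matrix.star_eq_conjTranspose]
  have hsym : ∀ h : Fin m → ℝ, (U * diagonal h * star U)ᵀ = U * diagonal h * star U := by
    intro h
    rw [hstar]
    simp only [Matrix.star_mul, star_star, Matrix.star_eq_conjTranspose, diagonal_conjTranspose]
    simp [Matrix.mul_assoc, star_trivial]
  have key : ∀ i, lam i * ((lam i)⁻¹ * lam i) = lam i := by
    intro i
    rcases eq_or_ne (lam i) 0 with h | h
    · simp [h]
    · field_simp
  have key2 : ∀ i, (lam i)⁻¹ * (lam i * (lam i)⁻¹) = (lam i)⁻¹ := by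
    intro i
    rcases eq_or_ne (lam i) 0 with h | h
    · simp [h]
    · field_simp
  refine ⟨U * diagonal (fun i => (lam i)⁻¹) * star U, ?_, ?_, ?_, ?_, ?_⟩
  · rw [hspec, conj, conj, diagonal_mul_diagonal, diagonal_mul_diagonal]
    have hv : (fun i => lam i * (lam i)⁻¹ * lam i) = lam := by
      funext i; simpa [mul_assoc] using key i
    rw [hv]
  · rw [hspec, conj, conj, diagonal_mul_diagonal, diagonal_mul_diagonal]
    have hv : (fun i => (lam i)⁻¹ * lam i * (lam i)⁻¹) = fun i => (lam i)⁻¹ := by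
      funext i; simpa [mul_assoc] using key2 i
    rw [hv]
  · rw [hspec, conj, diagonal_mul_diagonal, hsym]
  · rw [hspec, conj, diagonal_mul_diagonal, hsym]
  · rw [trace_mul_cycle, hsUU, Matrix.one_mul, trace_diagonal]
    rw [hlam]

lemma aux_G_isUnit {m r : ℕ} (V : Matrix (Fin m) (Fin r) ℝ) (hrank : V.rank = r) :
    IsUnit (Vᵀ * V) := by
  rw [← Matrix.mulVec_injective_iff_isUnit]
  have hker : LinearMap.ker (Vᵀ * V).mulVecLin = ⊥ := by
    rw [Matrix.ker_mulVecLin_transpose_mul_self]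
    have h1 := LinearMap.finrank_range_add_finrank_ker V.mulVecLin
    rw [Module.finrank_fin_fun] at h1
    have h2 : Module.finrank ℝ (LinearMap.range V.mulVecLin) = r := hrank
    rw [h2] at h1
    have h3 : Module.finrank ℝ (LinearMap.ker V.mulVecLin) = 0 := by omega
    exact Submodule.finrank_eq_zero.mp h3
  have hinj := LinearMap.ker_eq_bot.mp hker
  intro x y hxy
  exact hinj hxy

lemma aux_card_lt {m k : ℕ} (hk : k ≤ m) :
    (Finset.univ.filter (fun j : Fin m => (j : ℕ) < k)).card = k := by
  have : Finset.univ.filter (fun j : Fin m => (j : ℕ) < k)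
      = (Finset.range k).attachFin (fun x hx => lt_of_lt_of_le (Finset.mem_range.mp hx) hk) := by
    ext a
    simp [Finset.mem_attachFin]
  rw [this, Finset.card_attachFin, Finset.card_range]

lemma aux_trace_fromBlocks {n₁ n₂ : Type*} [Fintype n₁] [Fintype n₂]
    (A : Matrix n₁ n₁ ℝ) (B : Matrix n₁ n₂ ℝ) (C : Matrix n₂ n₁ ℝ) (D : Matrix n₂ n₂ ℝ) :
    (fromBlocks A B C D).trace = A.trace + D.trace := by
  simp [Matrix.trace, Matrix.diag, Fintype.sum_sum_type, fromBlocks]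

lemma aux_unit_matrix_eq (X : Matrix Unit Unit ℝ) : X = X () () • (1 : Matrix Unit Unit ℝ) := by
  ext i j
  simp [Matrix.one_apply]

lemma aux_trace_unit (X : Matrix Unit Unit ℝ) : X.trace = X () () := by
  simp [Matrix.trace, Matrix.diag]

lemma aux_entry {m : ℕ} (f : Fin m → ℝ) (X : Matrix (Fin m) (Fin m) ℝ) :
    ((replicateCol Unit f)ᵀ * X * replicateCol Unit f) () () = f ⬝ᵥ (X *ᵥ f) := by
  simp only [Matrix.mul_apply, Matrix.transpose_apply, Matrix.replicateCol_apply, dotProduct,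
    Matrix.mulVec, Finset.sum_mul, Finset.mul_sum]
  rw [Finset.sum_comm]
  apply Finset.sum_congr rfl
  intro i _
  apply Finset.sum_congr rfl
  intro j _
  ring

/-- A-optimality analogue of the Galil–Kiefer identity: for `M = VVᵀ` of rank
`r < m`, projector `P` onto the column space of `M`, Moore–Penrose
pseudoinverse `M⁺`, and `f` with `fᵀ(I−P)f > 0`, the sum of reciprocals of the
`r+1` largest eigenvalues of `M + ffᵀ` equals
`tr((VᵀV)⁻¹) + (1 + fᵀM⁺f)/(fᵀ(I−P)f)`. -/
theorem stmt15 (m r : ℕ) (hr : r < m) (V : Matrix (Fin m) (Fin r) ℝ)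
    (hrank : V.rank = r)
    (M : Matrix (Fin m) (Fin m) ℝ) (hM : M = V * Vᵀ)
    (P : Matrix (Fin m) (Fin m) ℝ)
    (hPsymm : Pᵀ = P) (hPidem : P * P = P)
    (hPrange : LinearMap.range P.mulVecLin = LinearMap.range M.mulVecLin)
    (Mp : Matrix (Fin m) (Fin m) ℝ)
    (hMp1 : M * Mp * M = M) (hMp2 : Mp * M * Mp = Mp)
    (hMp3 : (M * Mp)ᵀ = M * Mp) (hMp4 : (Mp * M)ᵀ = Mp * M)
    (f : Fin m → ℝ) (hf : 0 < f ⬝ᵥ ((1 - P) *ᵥ f))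
    (hA : (M + vecMulVec f f).IsHermitian)
    (μ : Fin m → ℝ) (hanti : Antitone μ)
    (hperm : ∃ σ : Equiv.Perm (Fin m), μ = hA.eigenvalues ∘ σ) :
    ∑ i ∈ Finset.univ.filter (fun i : Fin m => (i : ℕ) < r + 1), (μ i)⁻¹ =
      (Vᵀ * V)⁻¹.trace +
        (1 + f ⬝ᵥ (Mp *ᵥ f)) / (f ⬝ᵥ ((1 - P) *ᵥ f)) := by
  subst hM
  obtain ⟨σ, hσ⟩ := hperm
  -- the Gram matrix
  have hGunit : IsUnit (Vᵀ * V) := aux_G_isUnit V hrank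
  have hGdet : IsUnit (Vᵀ * V).det := (isUnit_iff_isUnit_det _).mp hGunit
  have hG1 : (Vᵀ * V) * (Vᵀ * V)⁻¹ = 1 := mul_nonsing_inv _ hGdet
  have hG2 : (Vᵀ * V)⁻¹ * (Vᵀ * V) = 1 := nonsing_inv_mul _ hGdet
  -- identify Mp
  obtain ⟨p1, p2, p3, p4⟩ := aux_pinv_conds V hGunit
  have hMp_eq : Mp = V * ((Vᵀ * V)⁻¹ * ((Vᵀ * V)⁻¹ * Vᵀ)) :=
    aux_pinv_unique (V * Vᵀ) Mp _ hMp1 hMp2 hMp3 hMp4 p1 p2 p3 p4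
  -- identify P
  have hrangeMP : LinearMap.range ((V * Vᵀ) * Mp).mulVecLin
      = LinearMap.range (V * Vᵀ).mulVecLin := by
    apply le_antisymm
    · rintro x ⟨y, rfl⟩
      exact ⟨Mp *ᵥ y, by simp [Matrix.mulVecLin_apply, Matrix.mulVec_mulVec]⟩
    · rintro x ⟨y, rfl⟩
      refine ⟨(V * Vᵀ) *ᵥ y, ?_⟩
      simp only [Matrix.mulVecLin_apply, Matrix.mulVec_mulVec]
      rw [hMp1]
  have hPeq' : P = (V * Vᵀ) * Mp := by
    apply aux_proj_unique P ((V * Vᵀ) * Mp) hPsymm hPidem hMp3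
    · calc (V * Vᵀ) * Mp * ((V * Vᵀ) * Mp) = ((V * Vᵀ) * Mp * (V * Vᵀ)) * Mp := by
            simp only [Matrix.mul_assoc]
        _ = (V * Vᵀ) * Mp := by rw [hMp1]
    · rw [hrangeMP]; exact hPrange
  have hPeq : P = V * ((Vᵀ * V)⁻¹ * Vᵀ) := by
    rw [hPeq', hMp_eq]
    simp only [Matrix.mul_assoc]
    rw [← Matrix.mul_assoc Vᵀ V, ← Matrix.mul_assoc (Vᵀ * V) ((Vᵀ * V)⁻¹), hG1, Matrix.one_mul]
  -- block matrix setup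
  set c : Matrix (Fin m) Unit ℝ := replicateCol Unit f with hc
  have entry : ∀ X : Matrix (Fin m) (Fin m) ℝ, (cᵀ * X * c) () () = f ⬝ᵥ (X *ᵥ f) :=
    fun X => aux_entry f X
  set a : ℝ := f ⬝ᵥ ((V * ((Vᵀ * V)⁻¹ * Vᵀ)) *ᵥ f) with ha
  set b : ℝ := f ⬝ᵥ f with hb
  have hs_eq : f ⬝ᵥ ((1 - P) *ᵥ f) = b - a := by
    rw [Matrix.sub_mulVec, dotProduct_sub, Matrix.one_mulVec, hPeq]
  have hs_pos : 0 < b - a := by rw [← hs_eq]; exact hf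
  have hs_ne : b - a ≠ 0 := ne_of_gt hs_pos
  have e_a : (cᵀ * V) * ((Vᵀ * V)⁻¹ * (Vᵀ * c)) = a • (1 : Matrix Unit Unit ℝ) := by
    have h := aux_unit_matrix_eq (cᵀ * (V * ((Vᵀ * V)⁻¹ * Vᵀ)) * c)
    rw [entry] at h
    calc (cᵀ * V) * ((Vᵀ * V)⁻¹ * (Vᵀ * c)) = cᵀ * (V * ((Vᵀ * V)⁻¹ * Vᵀ)) * c := by
          simp only [Matrix.mul_assoc]
    _ = a • 1 := h
  have e_b : cᵀ * c = b • (1 : Matrix Unit Unit ℝ) := by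
    have h := aux_unit_matrix_eq (cᵀ * c)
    have h2 : (cᵀ * c) () () = b := by
      rw [hc, hb]; simp [Matrix.mul_apply, dotProduct]
    rw [h2] at h
    exact h
  -- the explicit inverse of the bordered Gram matrix
  set K : Matrix (Fin r ⊕ Unit) (Fin r ⊕ Unit) ℝ := fromBlocks
      ((Vᵀ * V)⁻¹ + (b - a)⁻¹ • ((Vᵀ * V)⁻¹ * (Vᵀ * c) * (cᵀ * V) * (Vᵀ * V)⁻¹))
      (-(b - a)⁻¹ • ((Vᵀ * V)⁻¹ * (Vᵀ * c)))
      (-(b - a)⁻¹ • ((cᵀ * V) * (Vᵀ * V)⁻¹))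
      ((b - a)⁻¹ • 1) with hK
  have hWK : fromBlocks (Vᵀ * V) (Vᵀ * c) (cᵀ * V) (cᵀ * c) * K = 1 := by
    rw [hK, fromBlocks_multiply, ← fromBlocks_one]
    have g11 : (Vᵀ * V) * ((Vᵀ * V)⁻¹ + (b - a)⁻¹ • ((Vᵀ * V)⁻¹ * (Vᵀ * c) * (cᵀ * V) * (Vᵀ * V)⁻¹))
        + (Vᵀ * c) * (-(b - a)⁻¹ • ((cᵀ * V) * (Vᵀ * V)⁻¹)) = 1 := by
      rw [Matrix.mul_add, Matrix.mul_smul, Matrix.mul_smul, hG1]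
      have h1 : (Vᵀ * V) * ((Vᵀ * V)⁻¹ * (Vᵀ * c) * (cᵀ * V) * (Vᵀ * V)⁻¹)
          = (Vᵀ * c) * ((cᵀ * V) * (Vᵀ * V)⁻¹) := by
        simp only [Matrix.mul_assoc]
        rw [← Matrix.mul_assoc Vᵀ V, ← Matrix.mul_assoc (Vᵀ * V) ((Vᵀ * V)⁻¹), hG1,
          Matrix.one_mul]
      rw [h1]
      simp [neg_smul]
    have g12 : (Vᵀ * V) * (-(b - a)⁻¹ • ((Vᵀ * V)⁻¹ * (Vᵀ * c)))
        + (Vᵀ * c) * ((b - a)⁻¹ • (1 : Matrix Unit Unit ℝ)) = 0 := by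
      rw [Matrix.mul_smul, Matrix.mul_smul, Matrix.mul_one, ← Matrix.mul_assoc, hG1,
        Matrix.one_mul]
      simp [neg_smul]
    have g21 : (cᵀ * V) * ((Vᵀ * V)⁻¹ + (b - a)⁻¹ • ((Vᵀ * V)⁻¹ * (Vᵀ * c) * (cᵀ * V) * (Vᵀ * V)⁻¹))
        + (cᵀ * c) * (-(b - a)⁻¹ • ((cᵀ * V) * (Vᵀ * V)⁻¹)) = 0 := by
      rw [Matrix.mul_add, Matrix.mul_smul, Matrix.mul_smul, e_b, Matrix.smul_mul,
        Matrix.one_mul]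
      have h1 : (cᵀ * V) * ((Vᵀ * V)⁻¹ * (Vᵀ * c) * (cᵀ * V) * (Vᵀ * V)⁻¹)
          = a • ((cᵀ * V) * (Vᵀ * V)⁻¹) := by
        calc (cᵀ * V) * ((Vᵀ * V)⁻¹ * (Vᵀ * c) * (cᵀ * V) * (Vᵀ * V)⁻¹)
            = ((cᵀ * V) * ((Vᵀ * V)⁻¹ * (Vᵀ * c))) * ((cᵀ * V) * (Vᵀ * V)⁻¹) := by
              simp only [Matrix.mul_assoc]
        _ = (a • (1 : Matrix Unit Unit ℝ)) * ((cᵀ * V) * (Vᵀ * V)⁻¹) := by rw [e_a]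
        _ = a • ((cᵀ * V) * (Vᵀ * V)⁻¹) := by rw [Matrix.smul_mul, Matrix.one_mul]
      rw [h1]
      have hcoef : (1 : ℝ) + (b - a)⁻¹ * a + -(b - a)⁻¹ * b = 0 := by
        field_simp
        ring
      calc (cᵀ * V) * (Vᵀ * V)⁻¹ + (b - a)⁻¹ • (a • ((cᵀ * V) * (Vᵀ * V)⁻¹))
            + -(b - a)⁻¹ • (b • ((cᵀ * V) * (Vᵀ * V)⁻¹))
          = ((1 : ℝ) + (b - a)⁻¹ * a + -(b - a)⁻¹ * b) • ((cᵀ * V) * (Vᵀ * V)⁻¹) := by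
            module
      _ = 0 := by rw [hcoef, zero_smul]
    have g22 : (cᵀ * V) * (-(b - a)⁻¹ • ((Vᵀ * V)⁻¹ * (Vᵀ * c)))
        + (cᵀ * c) * ((b - a)⁻¹ • (1 : Matrix Unit Unit ℝ)) = 1 := by
      rw [Matrix.mul_smul, Matrix.mul_smul, Matrix.mul_one, e_a, e_b]
      have hcoef : -(b - a)⁻¹ * a + (b - a)⁻¹ * b = 1 := by
        field_simp
        ring
      calc -(b - a)⁻¹ • (a • (1 : Matrix Unit Unit ℝ)) + (b - a)⁻¹ • (b • (1 : Matrix Unit Unit ℝ))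
          = (-(b - a)⁻¹ * a + (b - a)⁻¹ * b) • (1 : Matrix Unit Unit ℝ) := by module
      _ = 1 := by rw [hcoef, one_smul]
    rw [g11, g12, g21, g22]
  -- the bordered Gram matrix is invertible with inverse K
  have hBt : (fromCols V c)ᵀ = fromRows Vᵀ cᵀ := transpose_fromCols V c
  have hWfb : (fromCols V c)ᵀ * fromCols V c
      = fromBlocks (Vᵀ * V) (Vᵀ * c) (cᵀ * V) (cᵀ * c) := by
    rw [hBt, fromRows_mul_fromCols]
  have hWK' : ((fromCols V c)ᵀ * fromCols V c) * K = 1 := by rw [hWfb]; exact hWK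
  have hWdet : IsUnit ((fromCols V c)ᵀ * fromCols V c).det :=
    Matrix.isUnit_det_of_right_inverse hWK'
  have hWunit : IsUnit ((fromCols V c)ᵀ * fromCols V c) :=
    (isUnit_iff_isUnit_det _).mpr hWdet
  have hWinv : ((fromCols V c)ᵀ * fromCols V c)⁻¹ = K := inv_eq_right_inv hWK'
  -- A as a Gram matrix
  have hAeq : V * Vᵀ + vecMulVec f f = fromCols V c * (fromCols V c)ᵀ := by
    rw [hBt, fromCols_mul_fromRows]
    congr 1
    rw [hc, transpose_replicateCol]
    exact vecMulVec_eq Unit f f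
  -- rank of A
  have hrankA : (V * Vᵀ + vecMulVec f f).rank = r + 1 := by
    rw [hAeq, Matrix.rank_self_mul_transpose, ← Matrix.rank_transpose_mul_self,
      Matrix.rank_of_isUnit _ hWunit]
    simp
  -- eigenvalues
  have hPSD : (V * Vᵀ + vecMulVec f f).PosSemidef := by
    rw [hAeq]
    have := Matrix.posSemidef_self_mul_conjTranspose (fromCols V c)
    rwa [conjTranspose_eq_transpose_of_trivial] at this
  have hnonneg : ∀ i, 0 ≤ hA.eigenvalues i := fun i => hPSD.eigenvalues_nonneg i
  have hcard : Fintype.card {i // hA.eigenvalues i ≠ 0} = r + 1 := by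
    rw [← Matrix.IsHermitian.rank_eq_card_non_zero_eigs hA]
    exact hrankA
  have hμ_nonneg : ∀ i, 0 ≤ μ i := by intro i; rw [hσ]; exact hnonneg _
  have hμcard : (Finset.univ.filter (fun i : Fin m => μ i ≠ 0)).card = r + 1 := by
    rw [hσ, ← hcard, Fintype.card_subtype]
    apply Finset.card_bij (fun i _ => σ i)
    · intro j hj
      simp only [Finset.mem_filter, Finset.mem_univ, true_and, Function.comp_apply] at hj ⊢
      exact hj
    · intro j _ k _ hjk
      exact σ.injective hjk
    · intro k hk
      refine ⟨σ.symm k, ?_, by simp⟩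
      simp only [Finset.mem_filter, Finset.mem_univ, true_and, Function.comp_apply] at hk ⊢
      simpa using hk
  have hchar : ∀ i : Fin m, (i : ℕ) < r + 1 ↔ μ i ≠ 0 := by
    intro i
    constructor
    · intro hi
      by_contra h0
      have hsub : Finset.univ.filter (fun j : Fin m => μ j ≠ 0)
          ⊆ Finset.univ.filter (fun j : Fin m => (j : ℕ) < (i : ℕ)) := by
        intro j hj
        simp only [Finset.mem_filter, Finset.mem_univ, true_and] at hj ⊢
        by_contra hj2
        push_neg at hj2
        have hle : i ≤ j := hj2
        exact hj (le_antisymm ((hanti hle).trans_eq h0) (hμ_nonneg j))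
      have hcc := Finset.card_le_card hsub
      rw [hμcard, aux_card_lt (le_of_lt i.isLt)] at hcc
      omega
    · intro hne
      by_contra hge
      push_neg at hge
      have hpos : 0 < μ i := lt_of_le_of_ne (hμ_nonneg i) (Ne.symm hne)
      have hsub : Finset.univ.filter (fun j : Fin m => (j : ℕ) < (i : ℕ) + 1)
          ⊆ Finset.univ.filter (fun j : Fin m => μ j ≠ 0) := by
        intro j hj
        simp only [Finset.mem_filter, Finset.mem_univ, true_and] at hj ⊢
        have hle : j ≤ i := Nat.lt_succ_iff.mp hj
        exact ne_of_gt (lt_of_lt_of_le hpos (hanti hle))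
      have hcc := Finset.card_le_card hsub
      rw [aux_card_lt (Nat.succ_le_of_lt i.isLt), hμcard] at hcc
      omega
  -- reduce the partial sum to the full sum
  have hLHS : ∑ i ∈ Finset.univ.filter (fun i : Fin m => (i : ℕ) < r + 1), (μ i)⁻¹
      = ∑ i, (μ i)⁻¹ := by
    apply Finset.sum_subset (Finset.filter_subset _ _)
    intro x _ hx
    simp only [Finset.mem_filter, Finset.mem_univ, true_and] at hx
    have hx0 : μ x = 0 := by
      by_contra hxx
      exact hx ((hchar x).mpr hxx)
    rw [hx0, _root_.inv_zero]
  have hsum2 : ∑ i, (μ i)⁻¹ = ∑ i, (hA.eigenvalues i)⁻¹ := by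
    rw [hσ]
    exact Equiv.sum_comp σ (fun j => (hA.eigenvalues j)⁻¹)
  -- identify the pseudoinverse of A and compute its trace
  obtain ⟨Ap, a1, a2, a3, a4, a5⟩ := aux_spectral (V * Vᵀ + vecMulVec f f) hA
  obtain ⟨b1, b2, b3, b4⟩ := aux_pinv_conds (fromCols V c) hWunit
  rw [← hAeq] at b1 b2 b3 b4
  have hApEq : Ap = fromCols V c * (((fromCols V c)ᵀ * fromCols V c)⁻¹ *
      (((fromCols V c)ᵀ * fromCols V c)⁻¹ * (fromCols V c)ᵀ)) :=
    aux_pinv_unique (V * Vᵀ + vecMulVec f f) Ap _ a1 a2 a3 a4 b1 b2 b3 b4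
  have hKW : K * ((fromCols V c)ᵀ * fromCols V c) = 1 := mul_eq_one_comm.mp hWK'
  have htr : Ap.trace = K.trace := by
    rw [hApEq, hWinv, trace_mul_comm]
    simp only [Matrix.mul_assoc]
    rw [hKW, Matrix.mul_one]
  have htrK : K.trace = (Vᵀ * V)⁻¹.trace + (1 + f ⬝ᵥ (Mp *ᵥ f)) / (b - a) := by
    rw [hK, aux_trace_fromBlocks, trace_add, trace_smul, trace_smul]
    have t1 : ((Vᵀ * V)⁻¹ * (Vᵀ * c) * (cᵀ * V) * (Vᵀ * V)⁻¹).trace = f ⬝ᵥ (Mp *ᵥ f) := by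
      have e1 : (Vᵀ * V)⁻¹ * (Vᵀ * c) * (cᵀ * V) * (Vᵀ * V)⁻¹
          = ((Vᵀ * V)⁻¹ * (Vᵀ * c)) * ((cᵀ * V) * (Vᵀ * V)⁻¹) := by
        simp only [Matrix.mul_assoc]
      rw [e1, trace_mul_comm]
      have e2 : ((cᵀ * V) * (Vᵀ * V)⁻¹) * ((Vᵀ * V)⁻¹ * (Vᵀ * c))
          = cᵀ * (V * ((Vᵀ * V)⁻¹ * ((Vᵀ * V)⁻¹ * Vᵀ))) * c := by
        simp only [Matrix.mul_assoc]
      rw [e2, aux_trace_unit, entry, ← hMp_eq]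
    rw [t1]
    have t2 : (1 : Matrix Unit Unit ℝ).trace = 1 := by simp
    rw [t2]
    rw [smul_eq_mul, smul_eq_mul]
    field_simp
    ring
  rw [hLHS, hsum2, ← a5, htr, htrK, hs_eq]
end

section
/- Under the setting of the previous identity, for a finite set G ⊂ R^m with every f ∈ G satisfying f'(I_m − P)f > 0: argmax over f ∈ G of (Σ_{i=1}^{r+1} λ_i^{-1}(M + ff'))^{-1} equals argmax over f ∈ G of f'(I_m − P)f / (1 + f'M^+f). -/
open Matrix Finset

variable {n : ℕ}

lemma mul_vecMulVec' (A : Matrix (Fin n) (Fin n) ℝ) (u v : Fin n → ℝ) :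
    A * vecMulVec u v = vecMulVec (A *ᵥ u) v := by
  ext i j
  simp [mul_apply, vecMulVec_apply, mulVec, dotProduct, Finset.sum_mul, mul_assoc]

lemma vecMulVec_mul' (A : Matrix (Fin n) (Fin n) ℝ) (u v : Fin n → ℝ) :
    vecMulVec u v * A = vecMulVec u (Aᵀ *ᵥ v) := by
  ext i j
  simp [mul_apply, vecMulVec_apply, mulVec, dotProduct, Finset.mul_sum, transpose_apply]
  congr 1; ext l; ring

lemma vecMulVec_mul_vecMulVec' (u v w x : Fin n → ℝ) :
    vecMulVec u v * vecMulVec w x = (v ⬝ᵥ w) • vecMulVec u x := by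
  ext i j
  simp [mul_apply, vecMulVec_apply, dotProduct, Finset.sum_mul, Finset.mul_sum]
  congr 1; ext l; ring

lemma vecMulVec_mulVec' (u v x : Fin n → ℝ) :
    vecMulVec u v *ᵥ x = (v ⬝ᵥ x) • u := by
  funext i
  simp [vecMulVec_apply, mulVec, dotProduct, Finset.sum_mul, Finset.mul_sum]
  congr 1; ext l; ring

lemma vecMulVec_zero_left' (v : Fin n → ℝ) : vecMulVec (0 : Fin n → ℝ) v = 0 := by
  ext i j; simp [vecMulVec_apply]

lemma vecMulVec_zero_right' (v : Fin n → ℝ) : vecMulVec v (0 : Fin n → ℝ) = 0 := by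
  ext i j; simp [vecMulVec_apply]

lemma vecMulVec_transpose' (u v : Fin n → ℝ) : (vecMulVec u v)ᵀ = vecMulVec v u := by
  ext i j; simp [vecMulVec_apply, mul_comm]

lemma vecMulVec_sub_left' (u v x : Fin n → ℝ) :
    vecMulVec (u - v) x = vecMulVec u x - vecMulVec v x := by
  ext i j; simp [vecMulVec_apply]; ring

lemma trace_vecMulVec' (u v : Fin n → ℝ) : (vecMulVec u v).trace = u ⬝ᵥ v := by
  simp [Matrix.trace, Matrix.diag, vecMulVec_apply, dotProduct]

lemma meyer_penrose (M P Mp : Matrix (Fin n) (Fin n) ℝ)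
    (hMsymm : Mᵀ = M) (hMpsymm : Mpᵀ = Mp)
    (hPMMp : P = M * Mp) (hPMpM : P = Mp * M)
    (hMp1 : M * Mp * M = M) (hMp2 : Mp * M * Mp = Mp)
    (f : Fin n → ℝ) (hδ : f ⬝ᵥ ((1 - P) *ᵥ f) ≠ 0) :
    ∃ Np : Matrix (Fin n) (Fin n) ℝ,
      (M + vecMulVec f f) * Np * (M + vecMulVec f f) = (M + vecMulVec f f) ∧
      Np * (M + vecMulVec f f) * Np = Np ∧
      ((M + vecMulVec f f) * Np)ᵀ = (M + vecMulVec f f) * Np ∧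
      (Np * (M + vecMulVec f f))ᵀ = Np * (M + vecMulVec f f) ∧
      Np.trace = Mp.trace + (1 + f ⬝ᵥ (Mp *ᵥ f)) / (f ⬝ᵥ ((1 - P) *ᵥ f)) := by
  classical
  set c : Fin n → ℝ := (1 - P) *ᵥ f with hc
  set k : Fin n → ℝ := Mp *ᵥ f with hk
  set δ : ℝ := f ⬝ᵥ c with hδdef
  set β : ℝ := 1 + f ⬝ᵥ k with hβ
  have hδ0 : δ ≠ 0 := hδ
  set N : Matrix (Fin n) (Fin n) ℝ := M + vecMulVec f f with hN
  set Np : Matrix (Fin n) (Fin n) ℝ :=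
    Mp + (-δ⁻¹) • vecMulVec k c + (-δ⁻¹) • vecMulVec c k + (β / δ ^ 2) • vecMulVec c c with hNp
  -- matrix identities
  have hPsymm : Pᵀ = P := by rw [hPMMp, transpose_mul, hMpsymm, hMsymm, ← hPMpM, hPMMp]
  have hMP : M * P = M := by rw [hPMpM, ← Matrix.mul_assoc, hMp1]
  have hPM : P * M = M := by rw [hPMMp, Matrix.mul_assoc, ← hPMpM, hPMpM, ← Matrix.mul_assoc, hMp1]
  have hMpP : Mp * P = Mp := by rw [hPMMp, ← Matrix.mul_assoc, hMp2]
  have hPMp : P * Mp = Mp := by rw [hPMpM, Matrix.mul_assoc, ← Matrix.mul_assoc, hMp2]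
  have hPP : P * P = P := by rw [hPMMp, ← Matrix.mul_assoc, ← hPMMp, hPM, hPMMp]
  -- vector identities
  have hcf : c = f - P *ᵥ f := by rw [hc, Matrix.sub_mulVec, Matrix.one_mulVec]
  have hMc : M *ᵥ c = 0 := by
    rw [hcf, Matrix.mulVec_sub, Matrix.mulVec_mulVec, hMP, sub_self]
  have hMpc : Mp *ᵥ c = 0 := by
    rw [hcf, Matrix.mulVec_sub, Matrix.mulVec_mulVec, hMpP, sub_self]
  have hPc : P *ᵥ c = 0 := by
    rw [hcf, Matrix.mulVec_sub, Matrix.mulVec_mulVec, hPP, sub_self]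
  have hPf : P *ᵥ f = f - c := by rw [hcf]; ring_nf
  have hMk : M *ᵥ k = f - c := by rw [hk, Matrix.mulVec_mulVec, ← hPMMp, hPf]
  have hPk : P *ᵥ k = k := by rw [hk, Matrix.mulVec_mulVec, hPMp]
  have hcc : c ⬝ᵥ c = δ := by
    have h1 : c ⬝ᵥ c = c ⬝ᵥ (f - P *ᵥ f) := by rw [← hcf]
    rw [h1, dotProduct_sub, dotProduct_mulVec, ← Matrix.mulVec_transpose, hPsymm, hPc,
      zero_dotProduct, sub_zero, dotProduct_comm, hδdef]
  have hkc : k ⬝ᵥ c = 0 := by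
    rw [dotProduct_comm, hk, dotProduct_mulVec, ← Matrix.mulVec_transpose, hMpsymm, hMpc,
      zero_dotProduct]
  have hck : c ⬝ᵥ k = 0 := by rw [dotProduct_comm, hkc]
  have hfk : f ⬝ᵥ k = β - 1 := by rw [hβ]; ring
  have hfc : f ⬝ᵥ c = δ := hδdef.symm
  have hNc : N *ᵥ c = δ • f := by
    rw [hN, Matrix.add_mulVec, hMc, vecMulVec_mulVec', hfc, zero_add]
  -- symmetry of N and Np
  have hNsymm : Nᵀ = N := by
    rw [hN, transpose_add, hMsymm, vecMulVec_transpose']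
  have hNpsymm : Npᵀ = Np := by
    rw [hNp]
    simp only [transpose_add, transpose_smul, hMpsymm, vecMulVec_transpose']
    abel
  -- elementary products
  have e1 : M * Mp = P := hPMMp.symm
  have e2 : M * vecMulVec k c = vecMulVec f c - vecMulVec c c := by
    rw [mul_vecMulVec', hMk, vecMulVec_sub_left']
  have e3 : M * vecMulVec c k = 0 := by rw [mul_vecMulVec', hMc, vecMulVec_zero_left']
  have e4 : M * vecMulVec c c = 0 := by rw [mul_vecMulVec', hMc, vecMulVec_zero_left']
  have e5 : vecMulVec f f * Mp = vecMulVec f k := by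
    rw [vecMulVec_mul', hMpsymm, ← hk]
  have e6 : vecMulVec f f * vecMulVec k c = (β - 1) • vecMulVec f c := by
    rw [vecMulVec_mul_vecMulVec', hfk]
  have e7 : vecMulVec f f * vecMulVec c k = δ • vecMulVec f k := by
    rw [vecMulVec_mul_vecMulVec', hfc]
  have e8 : vecMulVec f f * vecMulVec c c = δ • vecMulVec f c := by
    rw [vecMulVec_mul_vecMulVec', hfc]
  -- the key product
  have hNNp : N * Np = P + δ⁻¹ • vecMulVec c c := by
    rw [hN, hNp]
    simp only [mul_add, add_mul, mul_smul_comm, smul_mul_assoc]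
    rw [e1, e2, e3, e4, e5, e6, e7, e8]
    match_scalars <;> field_simp <;> try ring
  have hNpN : Np * N = P + δ⁻¹ • vecMulVec c c := by
    have : Np * N = (N * Np)ᵀ := by rw [transpose_mul, hNsymm, hNpsymm]
    rw [this, hNNp, transpose_add, transpose_smul, hPsymm, vecMulVec_transpose']
  refine ⟨Np, ?_, ?_, ?_, ?_, ?_⟩
  · have hcf2 : c ⬝ᵥ f = δ := by rw [dotProduct_comm, hfc]
    rw [hNNp, add_mul, smul_mul_assoc, hN, mul_add, hPM, mul_vecMulVec', hPf,
      vecMulVec_sub_left']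
    rw [mul_add, vecMulVec_mul', hMsymm, hMc, vecMulVec_zero_right',
      vecMulVec_mul_vecMulVec', hcf2]
    match_scalars <;> field_simp <;> try ring
  · rw [hNpN, hNp]
    simp only [add_mul, mul_add, smul_mul_assoc, mul_smul_comm]
    rw [hPMp,
      show P * vecMulVec k c = vecMulVec k c by rw [mul_vecMulVec', hPk],
      show P * vecMulVec c k = 0 by rw [mul_vecMulVec', hPc, vecMulVec_zero_left'],
      show P * vecMulVec c c = 0 by rw [mul_vecMulVec', hPc, vecMulVec_zero_left'],
      show vecMulVec c c * Mp = 0 by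
        rw [vecMulVec_mul', hMpsymm, hMpc, vecMulVec_zero_right'],
      show vecMulVec c c * vecMulVec k c = (0:ℝ) • vecMulVec c c by
        rw [vecMulVec_mul_vecMulVec', hck],
      show vecMulVec c c * vecMulVec c k = δ • vecMulVec c k by
        rw [vecMulVec_mul_vecMulVec', hcc],
      show vecMulVec c c * vecMulVec c c = δ • vecMulVec c c by
        rw [vecMulVec_mul_vecMulVec', hcc]]
    match_scalars <;> field_simp <;> try ring
  · rw [hNNp, transpose_add, transpose_smul, hPsymm, vecMulVec_transpose']
  · rw [hNpN, transpose_add, transpose_smul, hPsymm, vecMulVec_transpose']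
  · rw [hNp]
    simp only [Matrix.trace_add, Matrix.trace_smul, trace_vecMulVec', hkc, hck, hcc]
    rw [hδdef, hβ, hk]
    have hne : f ⬝ᵥ c ≠ 0 := hδ0
    field_simp
    simp only [smul_eq_mul, smul_zero, add_zero]
    field_simp
    ring

lemma penrose_unique {n : ℕ} (A X Y : Matrix (Fin n) (Fin n) ℝ)
    (hX1 : A * X * A = A) (hX2 : X * A * X = X)
    (hX3 : (A * X)ᵀ = A * X) (hX4 : (X * A)ᵀ = X * A)
    (hY1 : A * Y * A = A) (hY2 : Y * A * Y = Y)
    (hY3 : (A * Y)ᵀ = A * Y) (hY4 : (Y * A)ᵀ = Y * A) : X = Y := by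
  have hY1t : Aᵀ * (Yᵀ * Aᵀ) = Aᵀ := by
    rw [← transpose_mul, ← transpose_mul, hY1]
  have hAX : A * X = A * Y := by
    calc A * X = Xᵀ * Aᵀ := by rw [← transpose_mul, hX3]
    _ = Xᵀ * (Aᵀ * (Yᵀ * Aᵀ)) := by rw [hY1t]
    _ = (A * X)ᵀ * (A * Y)ᵀ := by simp only [transpose_mul, Matrix.mul_assoc]
    _ = (A * X) * (A * Y) := by rw [hX3, hY3]
    _ = A * Y := by rw [← Matrix.mul_assoc, hX1]
  have hXA : X * A = Y * A := by
    calc X * A = Aᵀ * Xᵀ := by rw [← transpose_mul, hX4]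
    _ = (Aᵀ * (Yᵀ * Aᵀ)) * Xᵀ := by rw [hY1t]
    _ = (Y * A)ᵀ * (X * A)ᵀ := by simp only [transpose_mul, Matrix.mul_assoc]
    _ = (Y * A) * (X * A) := by rw [hY4, hX4]
    _ = Y * A := by rw [Matrix.mul_assoc, ← Matrix.mul_assoc A X A, hX1]
  calc X = X * A * X := hX2.symm
  _ = X * (A * Y) := by rw [Matrix.mul_assoc, hAX]
  _ = (Y * A) * Y := by rw [← Matrix.mul_assoc, hXA]
  _ = Y := hY2

lemma spectral_pinv {n : ℕ} (N : Matrix (Fin n) (Fin n) ℝ) (hN : N.IsHermitian) :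
    ∃ X : Matrix (Fin n) (Fin n) ℝ,
      N * X * N = N ∧ X * N * X = X ∧ (N * X)ᵀ = N * X ∧ (X * N)ᵀ = X * N ∧
      X.trace = ∑ i, (hN.eigenvalues i)⁻¹ := by
  classical
  set U : Matrix (Fin n) (Fin n) ℝ := ↑(hN.eigenvectorUnitary) with hUdef
  have hU1 : star U * U = 1 := by
    exact (Matrix.mem_unitaryGroup_iff').mp (hN.eigenvectorUnitary).2
  have cancel : ∀ T : Matrix (Fin n) (Fin n) ℝ, star U * (U * T) = T := fun T => by
    rw [← Matrix.mul_assoc, hU1, Matrix.one_mul]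
  set μ := hN.eigenvalues with hμ
  have hsp : N = U * diagonal μ * star U := by
    have := hN.spectral_theorem
    simpa [RCLike.ofReal_real_eq_id] using this
  set D := diagonal μ with hD
  set E := diagonal (fun i => (μ i)⁻¹) with hE
  have key : ∀ A B : Matrix (Fin n) (Fin n) ℝ,
      (U * A * star U) * (U * B * star U) = U * (A * B) * star U := by
    intro A B
    simp only [Matrix.mul_assoc, cancel]
  have hfun1 : (fun i => μ i * (μ i)⁻¹ * μ i) = μ := by
    funext i
    rcases eq_or_ne (μ i) 0 with h | h
    · simp [h]
    · field_simp
  have hfun2 : (fun i => (μ i)⁻¹ * μ i * (μ i)⁻¹) = fun i => (μ i)⁻¹ := by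
    funext i
    rcases eq_or_ne (μ i) 0 with h | h
    · simp [h]
    · field_simp
  have hDED : D * E * D = D := by
    rw [hD, hE, diagonal_mul_diagonal, diagonal_mul_diagonal, hfun1]
  have hEDE : E * D * E = E := by
    rw [hD, hE, diagonal_mul_diagonal, diagonal_mul_diagonal, hfun2]
  have hsymm : ∀ A : Matrix (Fin n) (Fin n) ℝ, Aᵀ = A →
      (U * A * star U)ᵀ = U * A * star U := by
    intro A hA
    rw [star_eq_conjTranspose, conjTranspose_eq_transpose_of_trivial]
    rw [transpose_mul, transpose_mul, transpose_transpose, hA, Matrix.mul_assoc]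
  refine ⟨U * E * star U, ?_, ?_, ?_, ?_, ?_⟩
  · rw [hsp, key, key, hDED]
  · rw [hsp, key, key, hEDE]
  · rw [hsp, key]
    exact hsymm _ (by rw [hD, hE, diagonal_mul_diagonal, diagonal_transpose])
  · rw [hsp, key]
    exact hsymm _ (by rw [hD, hE, diagonal_mul_diagonal, diagonal_transpose])
  · rw [Matrix.trace_mul_comm, ← Matrix.mul_assoc, hU1, Matrix.one_mul, trace_diagonal]

lemma rank_add_le' {n : ℕ} (A B : Matrix (Fin n) (Fin n) ℝ) :
    (A + B).rank ≤ A.rank + B.rank := by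
  set s := LinearMap.range A.mulVecLin with hs
  set t := LinearMap.range B.mulVecLin with ht
  have hle : LinearMap.range (A + B).mulVecLin ≤ s ⊔ t := by
    rintro x ⟨v, rfl⟩
    refine Submodule.mem_sup.mpr ⟨A.mulVecLin v, ⟨v, rfl⟩, B.mulVecLin v, ⟨v, rfl⟩, ?_⟩
    simp [Matrix.add_mulVec]
  have h1 : (A + B).rank ≤ Module.finrank ℝ (s ⊔ t : Submodule ℝ (Fin n → ℝ)) :=
    Submodule.finrank_mono hle
  exact h1.trans (Submodule.finrank_add_le_finrank_add_finrank s t)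

lemma rank_vecMulVec_le {n : ℕ} (u v : Fin n → ℝ) : (vecMulVec u v).rank ≤ 1 := by
  rw [vecMulVec_eq (Fin 1)]
  exact (Matrix.rank_mul_le_left _ _).trans ((Matrix.rank_le_card_width _).trans (by simp))

lemma tail_zero {n r : ℕ} (L : Fin n → ℝ) (hA : Antitone L) (hnn : ∀ i, 0 ≤ L i)
    (hcard : (Finset.univ.filter fun i => L i ≠ 0).card ≤ r + 1) :
    ∀ i : Fin n, r + 1 ≤ (i : ℕ) → L i = 0 := by
  intro i hi
  by_contra hne
  have hpos : 0 < L i := lt_of_le_of_ne (hnn i) (Ne.symm hne)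
  have hsub : Finset.Iic i ⊆ Finset.univ.filter fun j => L j ≠ 0 := by
    intro j hj
    simp only [Finset.mem_Iic] at hj
    simp only [Finset.mem_filter, Finset.mem_univ, true_and]
    exact ne_of_gt (lt_of_lt_of_le hpos (hA hj))
  have := (Finset.card_le_card hsub).trans hcard
  rw [Fin.card_Iic] at this
  omega

lemma card_filter_comp {n : ℕ} (μ : Fin n → ℝ) (σ : Equiv.Perm (Fin n)) :
    (Finset.univ.filter fun j => μ (σ j) ≠ 0).card
      = (Finset.univ.filter fun j => μ j ≠ 0).card := by
  apply Finset.card_bij (fun j _ => σ j)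
  · intro a ha; simp_all
  · intro a _ b _ hab; exact σ.injective hab
  · intro b hb
    refine ⟨σ.symm b, ?_, by simp⟩
    simp_all

lemma eq_of_mulVec_eq' {n : ℕ} {A B : Matrix (Fin n) (Fin n) ℝ}
    (h : ∀ v, A *ᵥ v = B *ᵥ v) : A = B := by
  ext i j
  have := congrFun (h (Pi.single j 1)) i
  simpa [Matrix.mulVec_single] using this

/-- A-optimality Galil–Kiefer selection rule: over a finite `G` with
`fᵀ(I−P)f > 0` for all `f ∈ G`, the maximizers of
`(Σ_{i=1}^{r+1} λ_i⁻¹(M + ffᵀ))⁻¹` coincide with the maximizers of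
`fᵀ(I−P)f / (1 + fᵀM⁺f)`. -/
theorem stmt16 (m r : ℕ) (hr : r < m) (V : Matrix (Fin m) (Fin r) ℝ)
    (hrank : V.rank = r)
    (M : Matrix (Fin m) (Fin m) ℝ) (hM : M = V * Vᵀ)
    (P : Matrix (Fin m) (Fin m) ℝ)
    (hPsymm : Pᵀ = P) (hPidem : P * P = P)
    (hPrange : LinearMap.range P.mulVecLin = LinearMap.range M.mulVecLin)
    (Mp : Matrix (Fin m) (Fin m) ℝ)
    (hMp1 : M * Mp * M = M) (hMp2 : Mp * M * Mp = Mp)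
    (hMp3 : (M * Mp)ᵀ = M * Mp) (hMp4 : (Mp * M)ᵀ = Mp * M)
    (G : Set (Fin m → ℝ)) (hGfin : G.Finite)
    (hGpos : ∀ f ∈ G, 0 < f ⬝ᵥ ((1 - P) *ᵥ f))
    (hH : ∀ f : Fin m → ℝ, (M + vecMulVec f f).IsHermitian)
    (L : (Fin m → ℝ) → (Fin m → ℝ))
    (hLanti : ∀ f, Antitone (L f))
    (hLperm : ∀ f, ∃ σ : Equiv.Perm (Fin m), L f = (hH f).eigenvalues ∘ σ) :
    {f ∈ G | ∀ g ∈ G,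
        (∑ i ∈ Finset.univ.filter (fun i : Fin m => (i : ℕ) < r + 1), (L g i)⁻¹)⁻¹ ≤
        (∑ i ∈ Finset.univ.filter (fun i : Fin m => (i : ℕ) < r + 1), (L f i)⁻¹)⁻¹} =
    {f ∈ G | ∀ g ∈ G,
        (g ⬝ᵥ ((1 - P) *ᵥ g)) / (1 + g ⬝ᵥ (Mp *ᵥ g)) ≤
        (f ⬝ᵥ ((1 - P) *ᵥ f)) / (1 + f ⬝ᵥ (Mp *ᵥ f))} := by
  classical
  have hMsymm : Mᵀ = M := by rw [hM, transpose_mul, transpose_transpose]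
  have hMpsymm : Mpᵀ = Mp := by
    apply penrose_unique M Mpᵀ Mp ?_ ?_ ?_ ?_ hMp1 hMp2 hMp3 hMp4
    · have h := congrArg transpose hMp1
      rw [transpose_mul, transpose_mul, hMsymm] at h
      rw [← Matrix.mul_assoc] at h
      exact h
    · have h := congrArg transpose hMp2
      rw [transpose_mul, transpose_mul, hMsymm] at h
      rw [← Matrix.mul_assoc] at h
      exact h
    · have e : M * Mpᵀ = Mp * M := by
        have h := transpose_mul Mp M
        rw [hMp4, hMsymm] at h
        exact h.symm
      rw [e, hMp4]
    · have e2 : Mpᵀ * M = M * Mp := by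
        have h := transpose_mul M Mp
        rw [hMp3, hMsymm] at h
        exact h.symm
      rw [e2, hMp3]
  have h1 : (M * Mp) * P = P := eq_of_mulVec_eq' fun v => by
    have hv : P.mulVecLin v ∈ LinearMap.range M.mulVecLin :=
      hPrange ▸ LinearMap.mem_range_self _ v
    obtain ⟨w, hw⟩ := hv
    simp only [Matrix.mulVecLin_apply] at hw
    rw [← Matrix.mulVec_mulVec, ← hw, Matrix.mulVec_mulVec, hMp1, hw]
  have h2 : P * (M * Mp) = M * Mp := eq_of_mulVec_eq' fun v => by
    have hv : (M * Mp).mulVecLin v ∈ LinearMap.range P.mulVecLin := by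
      rw [hPrange]
      exact ⟨Mp *ᵥ v, by simp [Matrix.mulVecLin_apply, Matrix.mulVec_mulVec]⟩
    obtain ⟨w, hw⟩ := hv
    simp only [Matrix.mulVecLin_apply] at hw
    rw [← Matrix.mulVec_mulVec, ← hw, Matrix.mulVec_mulVec, hPidem, hw]
  have hPQ : P = M * Mp := by
    have h3 := congrArg transpose h1
    rw [transpose_mul, hPsymm, hMp3] at h3
    exact h3.symm.trans h2
  have hPQ2 : P = Mp * M := by
    have h := transpose_mul M Mp
    rw [hMp3, hMpsymm, hMsymm] at h
    rw [hPQ, h]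
  have hMpsd : M.PosSemidef := by
    rw [hM, show Vᵀ = Vᴴ from (Matrix.conjTranspose_eq_transpose_of_trivial V).symm]
    exact Matrix.posSemidef_self_mul_conjTranspose V
  have hMprank : M.rank ≤ r := by
    calc M.rank = (V * Vᵀ).rank := by rw [hM]
    _ ≤ V.rank := Matrix.rank_mul_le_left _ _
    _ ≤ Fintype.card (Fin r) := V.rank_le_card_width
    _ = r := Fintype.card_fin r
  have hMppsd : Mp.PosSemidef := by
    have key : Mp = (Vᵀ * Mp)ᴴ * (Vᵀ * Mp) := by
      rw [Matrix.conjTranspose_eq_transpose_of_trivial, transpose_mul, hMpsymm,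
        transpose_transpose]
      calc Mp = Mp * M * Mp := hMp2.symm
      _ = Mp * (V * Vᵀ) * Mp := by rw [hM]
      _ = Mp * V * (Vᵀ * Mp) := by simp only [Matrix.mul_assoc]
    rw [key]
    exact Matrix.posSemidef_conjTranspose_mul_self _
  have hMptr : 0 ≤ Mp.trace := by
    rw [Matrix.trace]
    apply Finset.sum_nonneg
    intro i _
    have := hMppsd.dotProduct_mulVec_nonneg (Pi.single i 1)
    simpa [Matrix.mulVec_single, dotProduct, Pi.single_apply] using this
  have hβnn : ∀ f : Fin m → ℝ, 0 ≤ f ⬝ᵥ (Mp *ᵥ f) := fun f => by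
    have := hMppsd.dotProduct_mulVec_nonneg f
    simpa using this
  -- the key trace identity
  have hkey : ∀ f ∈ G,
      (∑ i ∈ Finset.univ.filter (fun i : Fin m => (i : ℕ) < r + 1), (L f i)⁻¹)
        = Mp.trace + (1 + f ⬝ᵥ (Mp *ᵥ f)) / (f ⬝ᵥ ((1 - P) *ᵥ f)) := by
    intro f hf
    have hδpos := hGpos f hf
    obtain ⟨σ, hσ⟩ := hLperm f
    have hNH : (M + vecMulVec f f).IsHermitian := hH f
    have hffpsd : (vecMulVec f f).PosSemidef := by
      refine Matrix.PosSemidef.of_dotProduct_mulVec_nonneg ?_ ?_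
      · show (vecMulVec f f)ᴴ = _
        rw [Matrix.conjTranspose_eq_transpose_of_trivial, vecMulVec_transpose']
      · intro x
        rw [star_trivial, vecMulVec_mulVec', dotProduct_smul, smul_eq_mul, dotProduct_comm]
        exact mul_self_nonneg _
    have hNpsd : (M + vecMulVec f f).PosSemidef := hMpsd.add hffpsd
    have hnn : ∀ i, 0 ≤ (hH f).eigenvalues i := fun i => hNpsd.eigenvalues_nonneg i
    have hrankN : (M + vecMulVec f f).rank ≤ r + 1 :=
      (rank_add_le' M (vecMulVec f f)).trans
        (add_le_add hMprank (_root_.rank_vecMulVec_le f f))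
    have hcard : (Finset.univ.filter fun i => L f i ≠ 0).card ≤ r + 1 := by
      have hpredeq : (Finset.univ.filter fun j => L f j ≠ 0)
          = Finset.univ.filter fun j => (hH f).eigenvalues (σ j) ≠ 0 := by
        apply Finset.filter_congr
        intro j _
        rw [hσ]
        exact Iff.rfl
      rw [hpredeq, card_filter_comp _ σ]
      have h2 := hNH.rank_eq_card_non_zero_eigs
      rw [Fintype.card_subtype] at h2
      rw [← h2]
      exact hrankN
    have htail : ∀ i : Fin m, r + 1 ≤ (i : ℕ) → L f i = 0 :=
      tail_zero (L f) (hLanti f) (fun i => by rw [hσ]; exact hnn (σ i)) hcard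
    have hfull : (∑ i ∈ Finset.univ.filter (fun i : Fin m => (i : ℕ) < r + 1), (L f i)⁻¹)
        = ∑ i, (L f i)⁻¹ := by
      apply Finset.sum_subset (Finset.filter_subset _ _)
      intro i _ hi
      simp only [Finset.mem_filter, Finset.mem_univ, true_and, not_lt] at hi
      rw [htail i hi, _root_.inv_zero]
    have hperm : (∑ i, (L f i)⁻¹) = ∑ i, ((hH f).eigenvalues i)⁻¹ := by
      rw [hσ]
      exact Equiv.sum_comp σ (fun i => ((hH f).eigenvalues i)⁻¹)
    have hδne : f ⬝ᵥ ((1 - P) *ᵥ f) ≠ 0 := ne_of_gt hδpos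
    obtain ⟨Np, c1, c2, c3, c4, c5⟩ :=
      meyer_penrose M P Mp hMsymm hMpsymm hPQ hPQ2 hMp1 hMp2 f hδne
    obtain ⟨X, d1, d2, d3, d4, d5⟩ := spectral_pinv (M + vecMulVec f f) hNH
    have hXNp : X = Np := penrose_unique (M + vecMulVec f f) X Np d1 d2 d3 d4 c1 c2 c3 c4
    rw [hfull, hperm, ← d5, hXNp, c5]
  -- monotone transformation
  have equiv1 : ∀ f ∈ G, ∀ g ∈ G,
      ((∑ i ∈ Finset.univ.filter (fun i : Fin m => (i : ℕ) < r + 1), (L g i)⁻¹)⁻¹ ≤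
        (∑ i ∈ Finset.univ.filter (fun i : Fin m => (i : ℕ) < r + 1), (L f i)⁻¹)⁻¹ ↔
        (g ⬝ᵥ ((1 - P) *ᵥ g)) / (1 + g ⬝ᵥ (Mp *ᵥ g)) ≤
        (f ⬝ᵥ ((1 - P) *ᵥ f)) / (1 + f ⬝ᵥ (Mp *ᵥ f))) := by
    intro f hf g hg
    rw [hkey f hf, hkey g hg]
    have hδf := hGpos f hf
    have hδg := hGpos g hg
    have hβf : (0:ℝ) < 1 + f ⬝ᵥ (Mp *ᵥ f) := by have := hβnn f; linarith
    have hβg : (0:ℝ) < 1 + g ⬝ᵥ (Mp *ᵥ g) := by have := hβnn g; linarith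
    have hSf : 0 < Mp.trace + (1 + f ⬝ᵥ (Mp *ᵥ f)) / (f ⬝ᵥ ((1 - P) *ᵥ f)) :=
      add_pos_of_nonneg_of_pos hMptr (div_pos hβf hδf)
    have hSg : 0 < Mp.trace + (1 + g ⬝ᵥ (Mp *ᵥ g)) / (g ⬝ᵥ ((1 - P) *ᵥ g)) :=
      add_pos_of_nonneg_of_pos hMptr (div_pos hβg hδg)
    rw [inv_le_inv₀ hSg hSf, add_le_add_iff_left, div_le_div_iff₀ hδf hδg,
      div_le_div_iff₀ hβg hβf]
    constructor <;> intro h <;> nlinarith [h]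
  ext f
  simp only [Set.mem_setOf_eq]
  constructor
  · rintro ⟨hfG, hbig⟩
    exact ⟨hfG, fun g hg => (equiv1 f hfG g hg).mp (hbig g hg)⟩
  · rintro ⟨hfG, hbig⟩
    exact ⟨hfG, fun g hg => (equiv1 f hfG g hg).mpr (hbig g hg)⟩
end
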